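/- arXiv:1805.08855 — 8 statements merged into one kernel-verified Lean document; each statement's English description precedes it below -/
import Mathlib

section
/- Define g(θ) = arccos( ((π − θ)cos θ + sin θ)/π ) for θ ∈ [0, π]. Then for all θ ∈ (0, π], g(θ) ≤ (1/(3π) + 1/θ)^{−1}. -/
open Real

/-- If `f 0 = 0` and `f` has nonnegative derivative on `[0, ∞)`, then `f x ≥ 0` for `x ≥ 0`. -/
lemma my_nonneg_of_deriv {f f' : ℝ → ℝ} (hd : ∀ x, HasDerivAt f (f' x) x)
    (h0 : f 0 = 0) (hf' : ∀ x, 0 ≤ x → 0 ≤ f' x) {x : ℝ} (hx : 0 ≤ x) : 0 ≤ f x := by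
  have hmono : MonotoneOn f (Set.Ici (0:ℝ)) := by
    apply monotoneOn_of_deriv_nonneg (convex_Ici 0)
    · exact fun y _ => (hd y).continuousAt.continuousWithinAt
    · intro y _
      exact (hd y).differentiableAt.differentiableWithinAt
    · intro y hy
      rw [(hd y).deriv]
      refine hf' y ?_
      rw [interior_Ici] at hy
      exact le_of_lt hy
  have h := hmono Set.self_mem_Ici (by exact hx : x ∈ Set.Ici (0:ℝ)) hx
  rw [h0] at h
  exact h

lemma my_sin_lb1 {x : ℝ} (hx : 0 ≤ x) : x - x^3/6 ≤ Real.sin x := by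
  have hd : ∀ y : ℝ, HasDerivAt (fun y => Real.sin y - (y - y^3/6))
      (Real.cos y - (1 - y^2/2)) y := by
    intro y
    have h2 : HasDerivAt (fun y : ℝ => y - y^3/6) (1 - y^2/2) y := by
      have := (hasDerivAt_id y).sub ((hasDerivAt_pow 3 y).div_const 6)
      refine this.congr_deriv ?_
      push_cast
      ring
    exact (Real.hasDerivAt_sin y).sub h2
  have := my_nonneg_of_deriv hd (by norm_num) (fun y hy => by
    have := Real.one_sub_sq_div_two_le_cos (x := y); linarith) hx
  linarith [this]

lemma my_cos_ub {x : ℝ} (hx : 0 ≤ x) : Real.cos x ≤ 1 - x^2/2 + x^4/24 := by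
  have hd : ∀ y : ℝ, HasDerivAt (fun y : ℝ => 1 - y^2/2 + y^4/24 - Real.cos y)
      ((y - y^3/6 + Real.sin y) - (y - y^3/6 + (y - y^3/6))) y := by
    intro y
    have h2 : HasDerivAt (fun y : ℝ => 1 - y^2/2 + y^4/24) (-(y) + y^3/6) y := by
      have := (((hasDerivAt_const y (1:ℝ)).sub ((hasDerivAt_pow 2 y).div_const 2)).add
        ((hasDerivAt_pow 4 y).div_const 24))
      refine this.congr_deriv ?_
      push_cast
      ring
    have := h2.sub (Real.hasDerivAt_cos y)
    refine this.congr_deriv ?_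
    ring
  have := my_nonneg_of_deriv hd (by norm_num) (fun y hy => by
    have := my_sin_lb1 hy; linarith) hx
  linarith [this]

lemma my_sin_ub2 {x : ℝ} (hx : 0 ≤ x) : Real.sin x ≤ x - x^3/6 + x^5/120 := by
  have hd : ∀ y : ℝ, HasDerivAt (fun y : ℝ => y - y^3/6 + y^5/120 - Real.sin y)
      ((1 - y^2/2 + y^4/24) - Real.cos y) y := by
    intro y
    have h2 : HasDerivAt (fun y : ℝ => y - y^3/6 + y^5/120) (1 - y^2/2 + y^4/24) y := by
      have := ((hasDerivAt_id y).sub ((hasDerivAt_pow 3 y).div_const 6)).add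
        ((hasDerivAt_pow 5 y).div_const 120)
      refine this.congr_deriv ?_
      push_cast
      ring
    exact h2.sub (Real.hasDerivAt_sin y)
  have := my_nonneg_of_deriv hd (by norm_num) (fun y hy => by
    have := my_cos_ub hy; linarith) hx
  linarith [this]

lemma my_cos_lb3 {x : ℝ} (hx : 0 ≤ x) : 1 - x^2/2 + x^4/24 - x^6/720 ≤ Real.cos x := by
  have hd : ∀ y : ℝ, HasDerivAt (fun y : ℝ => Real.cos y - (1 - y^2/2 + y^4/24 - y^6/720))
      ((y - y^3/6 + y^5/120) - Real.sin y) y := by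
    intro y
    have h2 : HasDerivAt (fun y : ℝ => 1 - y^2/2 + y^4/24 - y^6/720)
        (-(y) + y^3/6 - y^5/120) y := by
      have := ((((hasDerivAt_const y (1:ℝ)).sub ((hasDerivAt_pow 2 y).div_const 2)).add
        ((hasDerivAt_pow 4 y).div_const 24)).sub ((hasDerivAt_pow 6 y).div_const 720))
      refine this.congr_deriv ?_
      push_cast
      ring
    have := (Real.hasDerivAt_cos y).sub h2
    refine this.congr_deriv ?_
    ring
  have := my_nonneg_of_deriv hd (by norm_num) (fun y hy => by
    have := my_sin_ub2 hy; linarith) hx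
  linarith [this]

lemma my_sin_lb4 {x : ℝ} (hx : 0 ≤ x) : x - x^3/6 + x^5/120 - x^7/5040 ≤ Real.sin x := by
  have hd : ∀ y : ℝ, HasDerivAt
      (fun y : ℝ => Real.sin y - (y - y^3/6 + y^5/120 - y^7/5040))
      (Real.cos y - (1 - y^2/2 + y^4/24 - y^6/720)) y := by
    intro y
    have h2 : HasDerivAt (fun y : ℝ => y - y^3/6 + y^5/120 - y^7/5040)
        (1 - y^2/2 + y^4/24 - y^6/720) y := by
      have := (((hasDerivAt_id y).sub ((hasDerivAt_pow 3 y).div_const 6)).add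
        ((hasDerivAt_pow 5 y).div_const 120)).sub ((hasDerivAt_pow 7 y).div_const 5040)
      refine this.congr_deriv ?_
      push_cast
      ring
    exact (Real.hasDerivAt_sin y).sub h2
  have := my_nonneg_of_deriv hd (by norm_num) (fun y hy => by
    have := my_cos_lb3 hy; linarith) hx
  linarith [this]

set_option maxHeartbeats 1000000 in
lemma my_keypoly (p θ : ℝ) (hp : 3.141592 < p) (hp2 : p < 3.141593) (h0 : 0 < θ)
    (h1 : θ ≤ p) :
    (1 - (3*p*θ/(3*p+θ))^2/2 + (3*p*θ/(3*p+θ))^4/24) * p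
      ≤ (p-θ)*(1-θ^2/2+θ^4/24-θ^6/720) + (θ-θ^3/6+θ^5/120-θ^7/5040) := by
  have hs : 0 < 3*p+θ := by nlinarith
  have hub : θ ≤ 3.141593 := h1.trans hp2.le
  have hp2l : (9.8696:ℝ) ≤ p^2 := by nlinarith
  have hp2u : p^2 ≤ 9.869607 := by nlinarith
  have hp3l : (31.006257:ℝ) ≤ p^3 := by nlinarith
  have hp3u : p^3 ≤ 31.006287 := by nlinarith
  have hp4l : (97.409009:ℝ) ≤ p^4 := by nlinarith
  have hp4u : p^4 ≤ 97.409134 := by nlinarith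
  have hp5u : p^5 ≤ 306.019854 := by nlinarith
  have t2 : (0:ℝ) ≤ θ^2 := sq_nonneg θ
  have t3 : (0:ℝ) ≤ θ^3 := pow_nonneg h0.le 3
  have t4 : (0:ℝ) ≤ θ^4 := pow_nonneg h0.le 4
  have t5 : (0:ℝ) ≤ θ^5 := pow_nonneg h0.le 5
  have hcube : (0:ℝ) ≤ 418.3 + 293.7*θ - 65.4*θ^2 - 17.8*θ^3 := by
    nlinarith [mul_nonneg h0.le (sub_nonneg.2 hub),
      mul_nonneg (mul_nonneg h0.le h0.le) (sub_nonneg.2 hub), sq_nonneg θ,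
      mul_nonneg (sq_nonneg θ) (sub_nonneg.2 hub)]
  have hc0 : (0:ℝ) ≤ 27/2*p^3 - 418.3 := by linarith
  have hc1 : (0:ℝ) ≤ (12*p^2 + 9/5*p^4 - 293.7) * θ := mul_nonneg (by linarith) h0.le
  have hc2 : (0:ℝ) ≤ (65.4 + 7/2*p - 27/20*p^3 - 9/80*p^5) * θ^2 :=
    mul_nonneg (by linarith) t2
  have hc3 : (0:ℝ) ≤ (17.8 + 1/3 - 13/10*p^2 - 3/56*p^4) * θ^3 :=
    mul_nonneg (by linarith) t3
  have hc4 : (0:ℝ) ≤ (3/56*p^3 - 43/120*p) * θ^4 := mul_nonneg (by linarith) t4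
  have hc5 : (0:ℝ) ≤ (1/21*p^2 - 1/30) * θ^5 := mul_nonneg (by linarith) t5
  have hc6 : (0:ℝ) ≤ 13/1008*p*θ^6 := by positivity
  have hc7 : (0:ℝ) ≤ 1/840*θ^7 := by positivity
  have hQ : 0 ≤ 27/2*p^3 + 12*p^2*θ + 9/5*p^4*θ + 7/2*p*θ^2 - 27/20*p^3*θ^2
      - 9/80*p^5*θ^2 + 1/3*θ^3 - 13/10*p^2*θ^3 - 3/56*p^4*θ^3 - 43/120*p*θ^4
      + 3/56*p^3*θ^4 - 1/30*θ^5 + 1/21*p^2*θ^5 + 13/1008*p*θ^6 + 1/840*θ^7 := by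
    nlinarith [hcube, hc0, hc1, hc2, hc3, hc4, hc5, hc6, hc7]
  have hD : (p-θ)*(1-θ^2/2+θ^4/24-θ^6/720) + (θ-θ^3/6+θ^5/120-θ^7/5040)
      - (1 - (3*p*θ/(3*p+θ))^2/2 + (3*p*θ/(3*p+θ))^4/24) * p
      = θ^4 * (27/2*p^3 + 12*p^2*θ + 9/5*p^4*θ + 7/2*p*θ^2 - 27/20*p^3*θ^2
      - 9/80*p^5*θ^2 + 1/3*θ^3 - 13/10*p^2*θ^3 - 3/56*p^4*θ^3 - 43/120*p*θ^4
      + 3/56*p^3*θ^4 - 1/30*θ^5 + 1/21*p^2*θ^5 + 13/1008*p*θ^6 + 1/840*θ^7)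
      / (3*p+θ)^4 := by
    field_simp
    ring
  have hnn : 0 ≤ θ^4 * (27/2*p^3 + 12*p^2*θ + 9/5*p^4*θ + 7/2*p*θ^2 - 27/20*p^3*θ^2
      - 9/80*p^5*θ^2 + 1/3*θ^3 - 13/10*p^2*θ^3 - 3/56*p^4*θ^3 - 43/120*p*θ^4
      + 3/56*p^3*θ^4 - 1/30*θ^5 + 1/21*p^2*θ^5 + 13/1008*p*θ^6 + 1/840*θ^7)
      / (3*p+θ)^4 := div_nonneg (mul_nonneg t4 hQ) (pow_nonneg hs.le 4)
  linarith [hD, hnn]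

noncomputable def g (θ : ℝ) : ℝ :=
  Real.arccos (((Real.pi - θ) * Real.cos θ + Real.sin θ) / Real.pi)

theorem stmt2 (θ : ℝ) (hθ : θ ∈ Set.Ioc 0 Real.pi) :
    g θ ≤ (1 / (3 * Real.pi) + 1 / θ)⁻¹ := by
  obtain ⟨hθ0, hθπ⟩ := hθ
  have hπ : (0:ℝ) < π := Real.pi_pos
  have hs : 0 < 3*π+θ := by linarith
  have hB : (1 / (3 * π) + 1 / θ)⁻¹ = 3*π*θ/(3*π+θ) := by
    rw [div_add_div _ _ (by positivity) (ne_of_gt hθ0)]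
    rw [inv_div]
    rw [one_mul, mul_one]
    ring_nf
  rw [hB]
  set B := 3*π*θ/(3*π+θ) with hBdef
  have hB0 : 0 ≤ B := by positivity
  have hBθ : B ≤ θ := by
    rw [hBdef, div_le_iff₀ hs]
    nlinarith
  have hBπ : B ≤ π := hBθ.trans hθπ
  have hkey : Real.cos B ≤ ((π - θ) * Real.cos θ + Real.sin θ) / π := by
    rw [le_div_iff₀ hπ]
    have h1 : Real.cos B * π ≤ (1 - B^2/2 + B^4/24) * π :=
      mul_le_mul_of_nonneg_right (my_cos_ub hB0) hπ.le
    have h2 := my_keypoly π θ Real.pi_gt_d6 Real.pi_lt_d6 hθ0 hθπ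
    have h3 : (π-θ)*(1-θ^2/2+θ^4/24-θ^6/720) + (θ-θ^3/6+θ^5/120-θ^7/5040)
        ≤ (π - θ) * Real.cos θ + Real.sin θ := by
      have hc := my_cos_lb3 hθ0.le
      have hsn := my_sin_lb4 hθ0.le
      have hpt : 0 ≤ π - θ := by linarith
      nlinarith [mul_le_mul_of_nonneg_left hc hpt]
    calc Real.cos B * π ≤ (1 - B^2/2 + B^4/24) * π := h1
      _ ≤ (π-θ)*(1-θ^2/2+θ^4/24-θ^6/720) + (θ-θ^3/6+θ^5/120-θ^7/5040) := h2
      _ ≤ (π - θ) * Real.cos θ + Real.sin θ := h3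
  have hx1 : ((π - θ) * Real.cos θ + Real.sin θ) / π ≤ 1 := by
    rw [div_le_one hπ]
    nlinarith [Real.cos_le_one θ, Real.sin_le hθ0.le]
  have hxm1 : (-1:ℝ) ≤ ((π - θ) * Real.cos θ + Real.sin θ) / π := by
    rw [le_div_iff₀ hπ]
    nlinarith [Real.neg_one_le_cos θ, Real.sin_nonneg_of_nonneg_of_le_pi hθ0.le hθπ]
  unfold g
  by_contra hcon
  push_neg at hcon
  have hlt := Real.cos_lt_cos_of_nonneg_of_le_pi hB0
    (Real.arccos_le_pi _) hcon
  rw [Real.cos_arccos hxm1 hx1] at hlt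
  linarith
end

section
/- Define g(θ) = arccos( ((π − θ)cos θ + sin θ)/π ) for θ ∈ [0, π]. Then for all θ ∈ (0, π], g(θ) ≥ (1/π + 1/θ)^{−1}. -/
open Real

lemma hd1 (y : ℝ) : HasDerivAt (fun y : ℝ => Real.sin y - y + y^3/6) (Real.cos y - 1 + y^2/2) y := by
  have h := ((Real.hasDerivAt_sin y).sub (hasDerivAt_id y)).add ((hasDerivAt_pow 3 y).div_const 6)
  refine h.congr_deriv ?_
  ring

lemma sin_ge_aux (x : ℝ) (hx : 0 ≤ x) : x - x^3/6 ≤ Real.sin x := by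
  have hmono : Monotone (fun y : ℝ => Real.sin y - y + y^3/6) := by
    apply monotone_of_deriv_nonneg
    · intro y; exact (hd1 y).differentiableAt
    · intro y
      rw [(hd1 y).deriv]
      nlinarith [Real.one_sub_sq_div_two_le_cos (x := y)]
  have := hmono hx
  simp only [Real.sin_zero] at this
  norm_num at this
  linarith

lemma hd2 (y : ℝ) : HasDerivAt (fun y : ℝ => 1 - y^2/2 + y^4/24 - Real.cos y) (-y + y^3/6 + Real.sin y) y := by
  have h := (((hasDerivAt_const y (1:ℝ)).sub ((hasDerivAt_pow 2 y).div_const 2)).add ((hasDerivAt_pow 4 y).div_const 24)).sub (Real.hasDerivAt_cos y)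
  refine h.congr_deriv ?_
  ring

lemma cos_le_aux (x : ℝ) (hx : 0 ≤ x) : Real.cos x ≤ 1 - x^2/2 + x^4/24 := by
  have hmono : MonotoneOn (fun y : ℝ => 1 - y^2/2 + y^4/24 - Real.cos y) (Set.Ici 0) := by
    apply monotoneOn_of_deriv_nonneg (convex_Ici 0)
    · exact Continuous.continuousOn (by fun_prop)
    · intro y _; exact (hd2 y).differentiableAt.differentiableWithinAt
    · intro y hy
      rw [interior_Ici] at hy
      rw [(hd2 y).deriv]
      have := sin_ge_aux y (le_of_lt hy)
      linarith
  have := hmono (Set.self_mem_Ici) (Set.mem_Ici.2 hx) hx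
  simp only [Real.cos_zero] at this
  norm_num at this
  linarith

lemma hd3 (y : ℝ) : HasDerivAt (fun y : ℝ => y - y^3/6 + y^5/120 - Real.sin y) (1 - y^2/2 + y^4/24 - Real.cos y) y := by
  have h := (((hasDerivAt_id y).sub ((hasDerivAt_pow 3 y).div_const 6)).add ((hasDerivAt_pow 5 y).div_const 120)).sub (Real.hasDerivAt_sin y)
  refine h.congr_deriv ?_
  ring

lemma sin_le_aux (x : ℝ) (hx : 0 ≤ x) : Real.sin x ≤ x - x^3/6 + x^5/120 := by
  have hmono : MonotoneOn (fun y : ℝ => y - y^3/6 + y^5/120 - Real.sin y) (Set.Ici 0) := by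
    apply monotoneOn_of_deriv_nonneg (convex_Ici 0)
    · exact Continuous.continuousOn (by fun_prop)
    · intro y _; exact (hd3 y).differentiableAt.differentiableWithinAt
    · intro y hy
      rw [interior_Ici] at hy
      rw [(hd3 y).deriv]
      have := cos_le_aux y (le_of_lt hy)
      linarith
  have := hmono (Set.self_mem_Ici) (Set.mem_Ici.2 hx) hx
  simp only [Real.sin_zero] at this
  norm_num at this
  linarith

set_option maxHeartbeats 1000000 in
lemma polyN (x : ℝ) (h1 : 0 < x) (h2 : x ≤ 21/10) :
    0 ≤ 13159/1000*x - 36312/10000*x^2 - 16537/10000*x^3 + 157/1000*x^4 + x^5/15 := by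
  have H1 : (0:ℝ) ≤ x*(x-21/10)^2*(x+42/10) :=
    mul_nonneg (mul_nonneg h1.le (sq_nonneg _)) (by linarith)
  have H2 : (0:ℝ) ≤ x*(x-21/10)^2*(x^2+42/10*x+1323/100) :=
    mul_nonneg (mul_nonneg h1.le (sq_nonneg _)) (by nlinarith [sq_nonneg x])
  have H3 : (0:ℝ) ≤ x*(21/10-x) := mul_nonneg h1.le (by linarith)
  have H4 : (0:ℝ) ≤ x^2 := sq_nonneg x
  have H5 : (0:ℝ) ≤ x*x*(21/10-x) := mul_nonneg (mul_nonneg h1.le h1.le) (by linarith)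
  linarith [H1, H2, H3, H4, H5]

set_option maxHeartbeats 1000000 in
lemma keyA (θ : ℝ) (h1 : 0 < θ) (h2 : θ ≤ 21/10) :
    (Real.pi - θ) * Real.cos θ + Real.sin θ ≤ Real.pi * Real.cos (Real.pi * θ / (Real.pi + θ)) := by
  have hπl : 3.141592 < Real.pi := Real.pi_gt_d6
  have hπu : Real.pi < 3.141593 := Real.pi_lt_d6
  have hπθ : 0 < Real.pi + θ := by linarith
  have hc := cos_le_aux θ h1.le
  have hs := sin_le_aux θ h1.le
  have hπmθ : 0 ≤ Real.pi - θ := by linarith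
  have hct := Real.one_sub_sq_div_two_le_cos (x := Real.pi * θ / (Real.pi + θ))
  have step1 : (Real.pi - θ) * Real.cos θ + Real.sin θ ≤
      (Real.pi - θ) * (1 - θ^2/2 + θ^4/24) + (θ - θ^3/6 + θ^5/120) := by
    nlinarith [mul_le_mul_of_nonneg_left hc hπmθ]
  have hu : Real.pi * (Real.pi * θ / (Real.pi + θ))^2 / 2 =
      Real.pi^3 * θ^2 / (2 * (Real.pi + θ)^2) := by
    field_simp
  have step2 : (Real.pi - θ) * (1 - θ^2/2 + θ^4/24) + (θ - θ^3/6 + θ^5/120) ≤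
      Real.pi - Real.pi^3 * θ^2 / (2 * (Real.pi + θ)^2) := by
    have hpos : (0:ℝ) < 2*(Real.pi+θ)^2 := by positivity
    have h5 : Real.pi^3*θ^2/(2*(Real.pi+θ)^2) ≤
        Real.pi - ((Real.pi - θ) * (1 - θ^2/2 + θ^4/24) + (θ - θ^3/6 + θ^5/120)) := by
      rw [div_le_iff₀ hpos]
      have hπ2l : (98696/10000 : ℝ) ≤ Real.pi^2 := by nlinarith
      have hπ3u : Real.pi^3 ≤ 310064/10000 := by nlinarith
      have B1 : (0:ℝ) ≤ (Real.pi^2 - 39477/4000) * θ^3 :=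
        mul_nonneg (by linarith) (by positivity)
      have B2 : (0:ℝ) ≤ (36312/10000 - (Real.pi^3/12 + Real.pi/3)) * θ^4 :=
        mul_nonneg (by nlinarith) (by positivity)
      have B3 : (0:ℝ) ≤ (16537/10000 - (Real.pi^2/10 + 2/3)) * θ^5 :=
        mul_nonneg (by nlinarith) (by positivity)
      have B4 : (0:ℝ) ≤ (Real.pi/20 - 157/1000) * θ^6 :=
        mul_nonneg (by nlinarith) (by positivity)
      have B5 : (0:ℝ) ≤ θ^2 * (13159/1000*θ - 36312/10000*θ^2 - 16537/10000*θ^3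
          + 157/1000*θ^4 + θ^5/15) :=
        mul_nonneg (sq_nonneg θ) (polyN θ h1 h2)
      linarith [B1, B2, B3, B4, B5]
    linarith
  have step3 : Real.pi - Real.pi^3 * θ^2 / (2 * (Real.pi + θ)^2) ≤
      Real.pi * Real.cos (Real.pi * θ / (Real.pi + θ)) := by
    rw [← hu]
    nlinarith [hct]
  linarith

lemma keyB (θ : ℝ) (h1 : 21/10 ≤ θ) (h2 : θ ≤ Real.pi) :
    (Real.pi - θ) * Real.cos θ + Real.sin θ ≤ Real.pi * Real.cos (Real.pi * θ / (Real.pi + θ)) := by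
  have hπl : 3.141592 < Real.pi := Real.pi_gt_d6
  have hπu : Real.pi < 3.141593 := Real.pi_lt_d6
  have hπθ : 0 < Real.pi + θ := by linarith
  have hs0 : 0 ≤ Real.pi - θ := by linarith
  have hcos : Real.cos θ ≤ (Real.pi - θ)^2/2 - 1 := by
    have := Real.one_sub_sq_div_two_le_cos (x := Real.pi - θ)
    rw [Real.cos_pi_sub] at this
    linarith
  have hsin : Real.sin θ ≤ Real.pi - θ := by
    have h := Real.sin_le hs0
    rw [Real.sin_pi_sub] at h
    exact h
  have step1 : (Real.pi - θ) * Real.cos θ + Real.sin θ ≤ (Real.pi - θ)^3/2 := by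
    nlinarith [mul_le_mul_of_nonneg_left hcos hs0]
  have ht0 : 0 ≤ Real.pi * θ / (Real.pi + θ) := by positivity
  have ht2 : Real.pi * θ / (Real.pi + θ) ≤ Real.pi / 2 := by
    rw [div_le_div_iff₀ hπθ (by norm_num)]
    nlinarith
  have hchord := Real.one_sub_mul_le_cos ht0 ht2
  have step3 : Real.pi - 2 * (Real.pi * θ / (Real.pi + θ)) ≤
      Real.pi * Real.cos (Real.pi * θ / (Real.pi + θ)) := by
    have hπ0 : (0:ℝ) < Real.pi := Real.pi_pos
    have := mul_le_mul_of_nonneg_left hchord hπ0.le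
    rw [mul_sub] at this
    calc Real.pi - 2 * (Real.pi * θ / (Real.pi + θ))
        = Real.pi * 1 - Real.pi * (2 / Real.pi * (Real.pi * θ / (Real.pi + θ))) := by
          field_simp
      _ ≤ _ := this
  have step2 : (Real.pi - θ)^3/2 ≤ Real.pi - 2 * (Real.pi * θ / (Real.pi + θ)) := by
    have heq : Real.pi - 2 * (Real.pi * θ / (Real.pi + θ)) = Real.pi * (Real.pi - θ) / (Real.pi + θ) := by
      field_simp; ring
    rw [heq, le_div_iff₀ hπθ]
    have hs1 : Real.pi - θ ≤ 1042/1000 := by linarith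
    rcases le_total (Real.pi - θ) 1 with hs | hs
    · have hA : (Real.pi-θ)^3 ≤ (Real.pi-θ) := by
        nlinarith [mul_nonneg (mul_nonneg hs0 (by linarith : (0:ℝ) ≤ 1-(Real.pi-θ)))
          (by linarith : (0:ℝ) ≤ 1+(Real.pi-θ))]
      nlinarith [mul_le_mul_of_nonneg_right hA hπθ.le, sq_nonneg (Real.pi-θ)]
    · nlinarith [mul_nonneg hs0 hs0, mul_nonneg (mul_nonneg hs0 hs0) hs0,
        mul_nonneg (mul_nonneg hs0 hs0) (by linarith : (0:ℝ) ≤ 1042/1000 - (Real.pi - θ)),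
        mul_nonneg (by linarith : (0:ℝ) ≤ Real.pi - θ - 1) (by linarith : (0:ℝ) ≤ 1042/1000 - (Real.pi - θ))]
  linarith

lemma key (θ : ℝ) (h1 : 0 < θ) (h2 : θ ≤ Real.pi) :
    (Real.pi - θ) * Real.cos θ + Real.sin θ ≤ Real.pi * Real.cos (Real.pi * θ / (Real.pi + θ)) := by
  rcases le_or_gt θ (21/10) with h | h
  · exact keyA θ h1 h
  · exact keyB θ h.le h2

theorem stmt3 (θ : ℝ) (hθ : θ ∈ Set.Ioc 0 Real.pi) :
    (1 / Real.pi + 1 / θ)⁻¹ ≤ g θ := by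
  obtain ⟨h0, h2⟩ := hθ
  have hπ0 : (0:ℝ) < Real.pi := Real.pi_pos
  have hπθ : (0:ℝ) < Real.pi + θ := by linarith
  have ht : (1 / Real.pi + 1 / θ)⁻¹ = Real.pi * θ / (Real.pi + θ) := by
    rw [show 1 / Real.pi + 1 / θ = (Real.pi + θ) / (Real.pi * θ) by
      field_simp; ring, inv_div]
  have ht0 : 0 ≤ Real.pi * θ / (Real.pi + θ) := by positivity
  have htπ : Real.pi * θ / (Real.pi + θ) ≤ Real.pi := by
    rw [div_le_iff₀ hπθ]
    nlinarith
  have hkey := key θ h0 h2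
  have hfle : ((Real.pi - θ) * Real.cos θ + Real.sin θ) / Real.pi ≤
      Real.cos (Real.pi * θ / (Real.pi + θ)) := by
    rw [div_le_iff₀ hπ0]
    linarith
  have harc : Real.arccos (Real.cos (Real.pi * θ / (Real.pi + θ))) ≤
      Real.arccos (((Real.pi - θ) * Real.cos θ + Real.sin θ) / Real.pi) := by
    rw [Real.arccos, Real.arccos]
    have := Real.monotone_arcsin hfle
    linarith
  rw [Real.arccos_cos ht0 htπ] at harc
  rw [ht]
  exact harc
end

section
/- For every θ ∈ [0, π], the derivative of g(θ) = arccos(((π − θ)cos θ + sin θ)/π) lies in the interval [0, 1]. -/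
theorem stmt6 (θ : ℝ) (hθ : θ ∈ Set.Icc 0 Real.pi) (d : ℝ) (hd : HasDerivAt g d θ) :
    d ∈ Set.Icc (0 : ℝ) 1 := by
  obtain ⟨h0, hπ⟩ := hθ
  rcases eq_or_lt_of_le h0 with h0' | h0'
  · -- θ = 0 : g has a global min there, so d = 0
    subst h0'
    have hmin : IsLocalMin g 0 := by
      apply Filter.Eventually.of_forall
      intro x
      have : g 0 = 0 := by
        simp [g, Real.arccos_eq_zero, le_refl, div_self Real.pi_ne_zero]
      rw [this]
      exact Real.arccos_nonneg _
    have := hmin.hasDerivAt_eq_zero hd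
    simp [this]
  · -- 0 < θ ≤ π
    set u : ℝ := ((Real.pi - θ) * Real.cos θ + Real.sin θ) / Real.pi with hu_def
    have hπ0 : (0:ℝ) < Real.pi := Real.pi_pos
    have hsin : Real.sin θ ≤ θ := Real.sin_le h0
    have hsin' : Real.sin θ < θ := Real.sin_lt h0'
    have hsinpos : 0 ≤ Real.sin θ := Real.sin_nonneg_of_nonneg_of_le_pi h0 hπ
    have ha : 0 ≤ Real.pi - θ := by linarith
    have hcos : Real.cos θ ≤ 1 := Real.cos_le_one θ
    have hcos' : -1 ≤ Real.cos θ := Real.neg_one_le_cos θ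
    have habs : |(Real.pi - θ) * Real.cos θ + Real.sin θ| < Real.pi := by
      rw [abs_lt]
      constructor <;> nlinarith
    have hult : u < 1 := by
      rw [hu_def, div_lt_one hπ0]
      exact lt_of_le_of_lt (le_abs_self _) habs
    have hugt : -1 < u := by
      rw [hu_def, lt_div_iff₀ hπ0]
      have := neg_abs_le ((Real.pi - θ) * Real.cos θ + Real.sin θ)
      nlinarith [abs_lt.mp habs]
    have hu1 : u ≠ 1 := ne_of_lt hult
    have hum : u ≠ -1 := ne_of_gt hugt
    have husq : u ^ 2 < 1 := by nlinarith
    have hs : 0 < Real.sqrt (1 - u ^ 2) := Real.sqrt_pos.mpr (by nlinarith)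
    -- derivative of the inner function
    have hinner : HasDerivAt (fun x : ℝ => ((Real.pi - x) * Real.cos x + Real.sin x) / Real.pi)
        (-((Real.pi - θ) * Real.sin θ) / Real.pi) θ := by
      have h1 : HasDerivAt (fun x : ℝ => (Real.pi - x) * Real.cos x + Real.sin x)
          (-((Real.pi - θ) * Real.sin θ)) θ := by
        have := (((hasDerivAt_id θ).const_sub Real.pi).mul (Real.hasDerivAt_cos θ)).add
          (Real.hasDerivAt_sin θ)
        exact this.congr_deriv (by simp only [id_eq]; ring)
      exact h1.div_const Real.pi
    have hg : HasDerivAt g (-(1 / Real.sqrt (1 - u ^ 2)) * (-((Real.pi - θ) * Real.sin θ) / Real.pi)) θ := by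
      have := (Real.hasDerivAt_arccos hum hu1).comp θ hinner
      exact this
    have hdval : d = (1 / Real.sqrt (1 - u ^ 2)) * ((Real.pi - θ) * Real.sin θ / Real.pi) := by
      have := hd.unique hg
      rw [this]; ring
    constructor
    · rw [hdval]
      have : 0 ≤ (Real.pi - θ) * Real.sin θ / Real.pi :=
        div_nonneg (mul_nonneg ha hsinpos) hπ0.le
      positivity
    · rw [hdval]
      rw [div_mul_eq_mul_div, one_mul, div_le_one hs]
      -- (π - θ) sin θ / π ≤ √(1 - u²)
      rw [show (1 : ℝ) - u ^ 2 = 1 - u ^ 2 from rfl]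
      have hA : 0 ≤ (Real.pi - θ) * Real.sin θ / Real.pi :=
        div_nonneg (mul_nonneg ha hsinpos) hπ0.le
      rw [Real.le_sqrt hA (by nlinarith)]
      have hpyth : Real.sin θ ^ 2 + Real.cos θ ^ 2 = 1 := Real.sin_sq_add_cos_sq θ
      rw [hu_def, div_pow, div_pow]
      have hπ2 : (0:ℝ) < Real.pi ^ 2 := by positivity
      have key : ((Real.pi - θ) * Real.sin θ) ^ 2 +
          ((Real.pi - θ) * Real.cos θ + Real.sin θ) ^ 2 ≤ Real.pi ^ 2 := by
        have e1 : ((Real.pi - θ) * Real.sin θ) ^ 2 +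
            ((Real.pi - θ) * Real.cos θ + Real.sin θ) ^ 2 =
            (Real.pi - θ) ^ 2 + 2 * (Real.pi - θ) * Real.cos θ * Real.sin θ +
              Real.sin θ ^ 2 := by
          linear_combination (Real.pi - θ) ^ 2 * hpyth
        have e2 : 2 * (Real.pi - θ) * Real.cos θ * Real.sin θ ≤
            2 * (Real.pi - θ) * Real.sin θ := by
          nlinarith [mul_nonneg (mul_nonneg ha hsinpos) (sub_nonneg.mpr hcos)]
        have e3 : (Real.pi - θ + Real.sin θ) ^ 2 ≤ Real.pi ^ 2 := by
          have h1 : 0 ≤ Real.pi - θ + Real.sin θ := by linarith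
          have h2 : Real.pi - θ + Real.sin θ ≤ Real.pi := by linarith
          nlinarith
        nlinarith [e1, e2, e3]
      have hq : (((Real.pi - θ) * Real.sin θ) ^ 2 +
          ((Real.pi - θ) * Real.cos θ + Real.sin θ) ^ 2) / Real.pi ^ 2 ≤ 1 :=
        (div_le_one hπ2).mpr key
      rw [add_div] at hq
      linarith
end

section
/- Define ρ_d = Σ_{i=0}^{d−1} (sin θ̌_i / π) · ∏_{j=i+1}^{d−1} (π − θ̌_j)/π, where θ̌_0 = π and θ̌_i = g(θ̌_{i−1}) with g(θ) = arccos(((π−θ)cosθ+sinθ)/π). Then ρ_d → 1 as d → ∞. -/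
open Real Set

private lemma mono0 {f f' : ℝ → ℝ} (hf : ∀ x, HasDerivAt f (f' x) x)
    (h' : ∀ x ∈ Set.Icc (0:ℝ) Real.pi, 0 ≤ f' x) {a : ℝ} (ha0 : 0 ≤ a) (haπ : a ≤ Real.pi) :
    f 0 ≤ f a := by
  have hd : Differentiable ℝ f := fun x => (hf x).differentiableAt
  have hmono : MonotoneOn f (Set.Icc 0 Real.pi) :=
    monotoneOn_of_deriv_nonneg (convex_Icc _ _) hd.continuous.continuousOn
      (hd.differentiableOn)
      (fun x hx => by rw [(hf x).deriv]; exact h' x (interior_subset hx))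
  exact hmono ⟨le_refl 0, Real.pi_pos.le⟩ ⟨ha0, haπ⟩ ha0

private lemma L1 {a : ℝ} (ha0 : 0 ≤ a) (haπ : a ≤ Real.pi) :
    0 ≤ Real.sin a - a * Real.cos a := by
  have h := mono0 (f := fun x => Real.sin x - x * Real.cos x)
    (f' := fun x => x * Real.sin x)
    (fun x => by
      have h1 : HasDerivAt (fun x : ℝ => x * Real.cos x) (1 * Real.cos x + x * (-Real.sin x)) x :=
        (hasDerivAt_id x).mul (Real.hasDerivAt_cos x)
      have := (Real.hasDerivAt_sin x).sub h1
      exact this.congr_deriv (by ring))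
    (fun x hx => mul_nonneg hx.1 (Real.sin_nonneg_of_nonneg_of_le_pi hx.1 hx.2))
    ha0 haπ
  simpa using h

private lemma L2 {a : ℝ} (ha0 : 0 ≤ a) (haπ : a ≤ Real.pi) :
    a ^ 2 * Real.sin a / 6 ≤ Real.sin a - a * Real.cos a := by
  have h := mono0 (f := fun x => Real.sin x - x * Real.cos x - x ^ 2 * Real.sin x / 6)
    (f' := fun x => x / 6 * (4 * Real.sin x - x * Real.cos x))
    (fun x => by
      have h1 : HasDerivAt (fun x : ℝ => x * Real.cos x) (1 * Real.cos x + x * (-Real.sin x)) x :=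
        (hasDerivAt_id x).mul (Real.hasDerivAt_cos x)
      have h2 : HasDerivAt (fun x : ℝ => x ^ 2 * Real.sin x / 6)
          ((2 * x ^ 1 * Real.sin x + x ^ 2 * Real.cos x) / 6) x := by
        exact (((hasDerivAt_pow 2 x).mul (Real.hasDerivAt_sin x))).div_const 6
      have := ((Real.hasDerivAt_sin x).sub h1).sub h2
      exact this.congr_deriv (by ring))
    (fun x hx => by
      have hs := Real.sin_nonneg_of_nonneg_of_le_pi hx.1 hx.2
      have h1 := L1 hx.1 hx.2
      have : 0 ≤ 4 * Real.sin x - x * Real.cos x := by nlinarith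
      exact mul_nonneg (div_nonneg hx.1 (by norm_num)) this)
    ha0 haπ
  simp only [Real.sin_zero, Real.cos_zero] at h
  nlinarith [h]

private lemma L3 {a : ℝ} (ha0 : 0 ≤ a) (haπ : a ≤ Real.pi) :
    Real.sin a - a * Real.cos a ≤ a ^ 3 / 3 := by
  have h := mono0 (f := fun x => x ^ 3 / 3 - (Real.sin x - x * Real.cos x))
    (f' := fun x => x * (x - Real.sin x))
    (fun x => by
      have h1 : HasDerivAt (fun x : ℝ => x * Real.cos x) (1 * Real.cos x + x * (-Real.sin x)) x :=
        (hasDerivAt_id x).mul (Real.hasDerivAt_cos x)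
      have := ((hasDerivAt_pow 3 x).div_const 3).sub ((Real.hasDerivAt_sin x).sub h1)
      exact this.congr_deriv (by ring))
    (fun x hx => mul_nonneg hx.1 (by nlinarith [Real.sin_le hx.1]))
    ha0 haπ
  simp only [Real.sin_zero, Real.cos_zero] at h
  nlinarith [h]

private lemma L4 {a : ℝ} (ha0 : 0 ≤ a) : a - Real.sin a ≤ a ^ 3 / 6 := by
  rcases le_or_gt a Real.pi with haπ | haπ
  · have h := mono0 (f := fun x => x ^ 3 / 6 - x + Real.sin x)
      (f' := fun x => x ^ 2 / 2 - 1 + Real.cos x)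
      (fun x => by
        have := (((hasDerivAt_pow 3 x).div_const 6).sub (hasDerivAt_id x)).add
          (Real.hasDerivAt_sin x)
        exact this.congr_deriv (by ring))
      (fun x _ => by nlinarith [Real.one_sub_sq_div_two_le_cos (x := x)])
      ha0 haπ
    simp only [Real.sin_zero] at h
    nlinarith [h]
  · have : Real.sin a ≥ -1 := Real.neg_one_le_sin a
    have h3 : 3 < a := lt_trans Real.pi_gt_three haπ
    nlinarith [sq_nonneg (a - 3), this]

private noncomputable def hh (θ : ℝ) : ℝ := ((Real.pi - θ) * Real.cos θ + Real.sin θ) / Real.pi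

private lemma hh_nonneg {θ : ℝ} (h0 : 0 ≤ θ) (hπ : θ ≤ Real.pi) : 0 ≤ hh θ := by
  have h := L1 (a := Real.pi - θ) (by linarith) (by linarith)
  rw [Real.sin_pi_sub, Real.cos_pi_sub] at h
  have : 0 ≤ (Real.pi - θ) * Real.cos θ + Real.sin θ := by nlinarith
  exact div_nonneg this Real.pi_pos.le

private lemma hh_le_one {θ : ℝ} (h0 : 0 ≤ θ) (hπ : θ ≤ Real.pi) : hh θ ≤ 1 := by
  have h1 : Real.sin θ ≤ θ := Real.sin_le h0
  have h2 : (Real.pi - θ) * Real.cos θ ≤ Real.pi - θ := by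
    nlinarith [Real.cos_le_one θ]
  rw [hh, div_le_one Real.pi_pos]
  linarith

private lemma hh_anti : AntitoneOn hh (Set.Icc 0 Real.pi) := by
  have hder : ∀ x : ℝ, HasDerivAt hh (-((Real.pi - x) * Real.sin x) / Real.pi) x := by
    intro x
    have h1 : HasDerivAt (fun y : ℝ => (Real.pi - y) * Real.cos y)
        ((0 - 1) * Real.cos x + (Real.pi - x) * (-Real.sin x)) x :=
      ((hasDerivAt_const x Real.pi).sub (hasDerivAt_id x)).mul (Real.hasDerivAt_cos x)
    have := (h1.add (Real.hasDerivAt_sin x)).div_const Real.pi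
    exact this.congr_deriv (by ring)
  have hd : Differentiable ℝ hh := fun x => (hder x).differentiableAt
  refine antitoneOn_of_deriv_nonpos (convex_Icc _ _) hd.continuous.continuousOn
    hd.differentiableOn (fun x hx => ?_)
  rw [(hder x).deriv]
  rw [interior_Icc] at hx
  have hs : 0 ≤ Real.sin x := Real.sin_nonneg_of_nonneg_of_le_pi hx.1.le hx.2.le
  have : 0 ≤ (Real.pi - x) * Real.sin x := mul_nonneg (by linarith [hx.2]) hs
  exact div_nonpos_of_nonpos_of_nonneg (by linarith) Real.pi_pos.le

private lemma g_eq (θ : ℝ) : g θ = Real.arccos (hh θ) := rfl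

private lemma arccos_le_of {x y : ℝ} (hy0 : 0 ≤ y) (hyπ : y ≤ Real.pi)
    (h : Real.cos y ≤ x) (hx : x ≤ 1) : Real.arccos x ≤ y := by
  by_contra hc
  push_neg at hc
  have hx1 : -1 ≤ x := le_trans (Real.neg_one_le_cos y) h
  have := Real.strictAntiOn_cos ⟨hy0, hyπ⟩ ⟨Real.arccos_nonneg x, Real.arccos_le_pi x⟩ hc
  rw [Real.cos_arccos hx1 hx] at this
  linarith

private lemma le_arccos_of {x y : ℝ} (hy0 : 0 ≤ y) (hyπ : y ≤ Real.pi)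
    (h : x ≤ Real.cos y) (hx : -1 ≤ x) : y ≤ Real.arccos x := by
  by_contra hc
  push_neg at hc
  have hx1 : x ≤ 1 := le_trans h (Real.cos_le_one y)
  have := Real.strictAntiOn_cos ⟨Real.arccos_nonneg x, Real.arccos_le_pi x⟩ ⟨hy0, hyπ⟩ hc
  rw [Real.cos_arccos hx hx1] at this
  linarith

private lemma g_mono {a b : ℝ} (ha : a ∈ Set.Icc 0 Real.pi) (hb : b ∈ Set.Icc 0 Real.pi)
    (hab : a ≤ b) : g a ≤ g b := by
  rw [g_eq, g_eq]
  have h1 : hh b ≤ hh a := hh_anti ha hb hab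
  exact arccos_le_of (Real.arccos_nonneg _) (Real.arccos_le_pi _)
    (by rw [Real.cos_arccos (by linarith [hh_nonneg hb.1 hb.2]) (hh_le_one hb.1 hb.2)]; exact h1)
    (hh_le_one ha.1 ha.2)

private lemma claimA {θ : ℝ} (h0 : 0 < θ) (hπ : θ ≤ Real.pi / 2) :
    g θ ≤ θ - θ ^ 2 / (6 * Real.pi) := by
  have hπpos := Real.pi_pos
  have hθπ : θ ≤ Real.pi := by linarith
  set δ := θ ^ 2 / (6 * Real.pi) with hδ
  have hδ0 : 0 ≤ δ := by positivity
  have hδθ : δ ≤ θ / 2 := by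
    rw [hδ, div_le_div_iff₀ (by positivity) (by norm_num)]
    nlinarith
  have hy0 : 0 ≤ θ - δ := by linarith
  have hyπ : θ - δ ≤ Real.pi := by linarith
  rw [g_eq]
  refine arccos_le_of hy0 hyπ ?_ (hh_le_one h0.le hθπ)
  -- cos (θ - δ) ≤ hh θ
  have hcosθ : 0 ≤ Real.cos θ := Real.cos_nonneg_of_mem_Icc ⟨by linarith, hπ⟩
  have hsinθ : 0 ≤ Real.sin θ := Real.sin_nonneg_of_nonneg_of_le_pi h0.le hθπ
  have h1 : Real.cos (θ - δ) ≤ Real.cos θ + δ * Real.sin θ := by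
    rw [Real.cos_sub]
    have := Real.cos_le_one δ
    have := Real.sin_le hδ0
    nlinarith
  have h2 : Real.cos θ + δ * Real.sin θ ≤ hh θ := by
    have hL2 := L2 h0.le hθπ
    rw [hh, le_div_iff₀ hπpos]
    have key : δ * Real.sin θ * Real.pi = θ ^ 2 * Real.sin θ / 6 := by
      rw [hδ]; field_simp
    nlinarith [hL2, key]
  linarith

private lemma claimC_poly {a : ℝ} (ha : 4 ≤ a) :
    (Real.pi / (a + 1)) ^ 2 / 2 + 5 / 96 * (Real.pi / a) ^ 4 + (Real.pi / a) ^ 3 / 3 / Real.pi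
      ≤ (Real.pi / a) ^ 2 / 2 := by
  have hπ1 : 3.141 ≤ Real.pi := by linarith [Real.pi_gt_d6]
  have hπ2 : Real.pi ≤ 3.15 := by linarith [Real.pi_lt_d2]
  have ha0 : (0:ℝ) < a := by linarith
  have ha1 : (0:ℝ) < a + 1 := by linarith
  have hπ0 : (0:ℝ) < Real.pi := by linarith
  have hM : (0:ℝ) < 96 * a ^ 4 * (a + 1) ^ 2 := by positivity
  have h10 : Real.pi ^ 2 ≤ 10 := by nlinarith
  have hq : Real.pi ^ 4 ≤ 10 * Real.pi ^ 2 := by nlinarith [sq_nonneg Real.pi, h10]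
  have hpoly : 48 * a ^ 4 + 50 * (a + 1) ^ 2 + 32 * a * (a + 1) ^ 2
      ≤ 48 * a ^ 2 * (a + 1) ^ 2 := by nlinarith [sq_nonneg (a - 4), sq_nonneg a]
  have hkey : 48 * Real.pi ^ 2 * a ^ 4 + 5 * Real.pi ^ 4 * (a + 1) ^ 2
      + 32 * Real.pi ^ 2 * a * (a + 1) ^ 2 ≤ 48 * Real.pi ^ 2 * a ^ 2 * (a + 1) ^ 2 := by
    nlinarith [mul_le_mul_of_nonneg_left hpoly (sq_nonneg Real.pi),
      mul_le_mul_of_nonneg_right hq (sq_nonneg (a + 1))]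
  rw [show (Real.pi / (a + 1)) ^ 2 / 2 + 5 / 96 * (Real.pi / a) ^ 4
        + (Real.pi / a) ^ 3 / 3 / Real.pi
      = (48 * Real.pi ^ 2 * a ^ 4 + 5 * Real.pi ^ 4 * (a + 1) ^ 2
        + 32 * Real.pi ^ 2 * a * (a + 1) ^ 2) / (96 * a ^ 4 * (a + 1) ^ 2) from by
        field_simp; ring,
    show (Real.pi / a) ^ 2 / 2
      = (48 * Real.pi ^ 2 * a ^ 2 * (a + 1) ^ 2) / (96 * a ^ 4 * (a + 1) ^ 2) from by
        field_simp; ring]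
  exact div_le_div_of_nonneg_right hkey hM.le

private lemma claimC (i : ℕ) (hi : 1 ≤ i) :
    Real.pi / (i + 2) ≤ g (Real.pi / ((i : ℝ) + 1)) := by
  have hπ := Real.pi_pos
  set s : ℝ := Real.pi / ((i : ℝ) + 1) with hs
  set s' : ℝ := Real.pi / ((i : ℝ) + 2) with hs'
  have hi1 : (1:ℝ) ≤ (i:ℝ) := by exact_mod_cast hi
  have hs0 : 0 < s := by positivity
  have hsπ : s ≤ Real.pi := by
    rw [hs, div_le_iff₀ (by linarith)]; nlinarith
  have hs'0 : 0 < s' := by positivity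
  have hs'π : s' ≤ Real.pi := by
    rw [hs', div_le_iff₀ (by linarith)]; nlinarith
  have hhm : hh s ∈ Set.Icc (0:ℝ) 1 := ⟨hh_nonneg hs0.le hsπ, hh_le_one hs0.le hsπ⟩
  have key : hh s ≤ Real.cos s' := by
    have hA : hh s = Real.cos s + (Real.sin s - s * Real.cos s) / Real.pi := by
      rw [hh]; field_simp; ring
    have hA' : hh s ≤ Real.cos s + s ^ 3 / 3 / Real.pi := by
      rw [hA]
      have h := div_le_div_of_nonneg_right (L3 hs0.le hsπ) hπ.le
      linarith
    rcases lt_or_ge i 3 with h3 | h3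
    · interval_cases i
      · -- i = 1 : s = π/2, s' = π/3
        have e1 : s = Real.pi / 2 := by rw [hs]; norm_num
        have e2 : s' = Real.pi / 3 := by rw [hs']; norm_num
        rw [e1, e2, hh, Real.cos_pi_div_two, Real.sin_pi_div_two, Real.cos_pi_div_three]
        rw [div_le_iff₀ hπ]
        nlinarith [Real.pi_gt_three]
      · -- i = 2 : s = π/3, s' = π/4
        have e1 : s = Real.pi / 3 := by rw [hs]; norm_num
        have e2 : s' = Real.pi / 4 := by rw [hs']; norm_num
        rw [e1, e2, hh, Real.cos_pi_div_three, Real.sin_pi_div_three, Real.cos_pi_div_four]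
        rw [div_le_iff₀ hπ]
        have h2 : (1.41:ℝ) ≤ Real.sqrt 2 := by
          rw [show (1.41:ℝ) = Real.sqrt (1.41^2) from (Real.sqrt_sq (by norm_num)).symm]
          exact Real.sqrt_le_sqrt (by norm_num)
        have h3 : Real.sqrt 3 ≤ 1.74 := Real.sqrt_le_iff.2 ⟨by norm_num, by norm_num⟩
        nlinarith [Real.pi_gt_d6, Real.pi_lt_d2]
    · -- i ≥ 3
      have ha : (4:ℝ) ≤ (i:ℝ) + 1 := by exact_mod_cast Nat.succ_le_succ h3
      have hD := claimC_poly (a := (i:ℝ) + 1) ha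
      have hB : Real.cos s ≤ 1 - s ^ 2 / 2 + 5 / 96 * s ^ 4 := by
        have habs : |s| ≤ 1 := by
          rw [abs_of_nonneg hs0.le, hs, div_le_one (by linarith)]
          nlinarith [Real.pi_lt_d2]
        have := (abs_le.1 (Real.cos_bound habs)).2
        rw [abs_of_nonneg hs0.le] at this
        nlinarith [this]
      have hC : 1 - s' ^ 2 / 2 ≤ Real.cos s' := Real.one_sub_sq_div_two_le_cos
      have hss : Real.pi / ((i:ℝ) + 1 + 1) = s' := by rw [hs']; ring_nf
      rw [hss] at hD
      linarith [hA', hB, hC, hD]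
  rw [g_eq]
  exact le_arccos_of hs'0.le hs'π key (by linarith [hhm.1])

section T
variable {t : ℕ → ℝ} (h0 : t 0 = Real.pi) (hrec : ∀ i, t (i + 1) = g (t i))
include h0 hrec

private lemma tmem (i : ℕ) : t i ∈ Set.Icc (0:ℝ) Real.pi := by
  cases i with
  | zero => rw [h0]; exact ⟨Real.pi_pos.le, le_refl _⟩
  | succ n => rw [hrec n, g_eq]; exact ⟨Real.arccos_nonneg _, Real.arccos_le_pi _⟩

private lemma t_half (i : ℕ) : t (i + 1) ≤ Real.pi / 2 := by
  rw [hrec i, g_eq]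
  exact Real.arccos_le_pi_div_two.2 (hh_nonneg (tmem h0 hrec i).1 (tmem h0 hrec i).2)

private lemma t1 : t 1 = Real.pi / 2 := by
  rw [hrec 0, h0, g_eq]
  have hz : hh Real.pi = 0 := by rw [hh]; simp
  rw [hz, Real.arccos_zero]

private lemma tlow (i : ℕ) : Real.pi / (i + 1) ≤ t i := by
  induction i with
  | zero => simp [h0]
  | succ n ih =>
    cases n with
    | zero =>
      rw [t1 h0 hrec]
      norm_num
    | succ m =>
      have hn1 : 1 ≤ m + 1 := Nat.succ_le_succ (Nat.zero_le m)
      have hmem : Real.pi / ((m + 1 : ℕ) + 1) ∈ Set.Icc (0:ℝ) Real.pi := by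
        constructor
        · positivity
        · rw [div_le_iff₀ (by positivity)]
          nlinarith [Real.pi_pos, Nat.cast_nonneg (α := ℝ) (m+1)]
      have hstep : g (Real.pi / ((m + 1 : ℕ) + 1)) ≤ t (m + 1 + 1) := by
        rw [hrec (m + 1)]
        exact g_mono hmem (tmem h0 hrec (m + 1)) ih
      have hC := claimC (m + 1) hn1
      have : ((m + 1 : ℕ) : ℝ) + 2 = ((m + 1 + 1 : ℕ) : ℝ) + 1 := by push_cast; ring
      rw [this] at hC
      exact le_trans hC hstep

private lemma tup (i : ℕ) : t i ≤ 6 * Real.pi / (i + 1) := by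
  induction i with
  | zero => rw [h0]; rw [Nat.cast_zero]; nlinarith [Real.pi_pos]
  | succ n ih =>
    rcases le_or_gt ((n:ℕ)) 10 with hn | hn
    · have h1 : t (n + 1) ≤ Real.pi / 2 := t_half h0 hrec n
      have h2 : Real.pi / 2 ≤ 6 * Real.pi / ((n + 1 : ℕ) + 1) := by
        rw [div_le_div_iff₀ (by norm_num) (by positivity)]
        have : ((n:ℝ)) ≤ 10 := by exact_mod_cast hn
        push_cast
        nlinarith [Real.pi_pos]
      linarith
    · have hx : (11:ℝ) ≤ (n:ℝ) := by exact_mod_cast hn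
      set x : ℝ := (n : ℝ) + 1 with hxdef
      have hx12 : (12:ℝ) ≤ x := by rw [hxdef]; linarith
      have hπ := Real.pi_pos
      have hb0 : 0 < 6 * Real.pi / x := by positivity
      have hb2 : 6 * Real.pi / x ≤ Real.pi / 2 := by
        rw [div_le_div_iff₀ (by linarith) (by norm_num)]
        nlinarith
      have hbm : 6 * Real.pi / x ∈ Set.Icc (0:ℝ) Real.pi := ⟨hb0.le, by linarith⟩
      have hstep : t (n + 1) ≤ g (6 * Real.pi / x) := by
        rw [hrec n]
        exact g_mono (tmem h0 hrec n) hbm ih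
      have hA := claimA hb0 hb2
      have harith : 6 * Real.pi / x - (6 * Real.pi / x) ^ 2 / (6 * Real.pi)
          ≤ 6 * Real.pi / (x + 1) := by
        have he : (6 * Real.pi / x) ^ 2 / (6 * Real.pi) = 6 * Real.pi / x ^ 2 := by
          field_simp
        rw [he, div_sub_div _ _ (by positivity) (by positivity),
          div_le_div_iff₀ (by positivity) (by positivity)]
        nlinarith
      have hcast : 6 * Real.pi / ((n + 1 : ℕ) + 1) = 6 * Real.pi / (x + 1) := by
        rw [hxdef]; push_cast; ring_nf
      rw [hcast]
      linarith

end T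

private lemma prodIco (a : ℕ) (ha : 1 ≤ a) :
    ∀ d, a ≤ d → ∏ j ∈ Finset.Ico a d, ((j : ℝ) / ((j : ℝ) + 1)) = (a : ℝ) / d := by
  refine Nat.le_induction ?_ ?_
  · rw [Finset.Ico_self, Finset.prod_empty]
    rw [div_self (by exact_mod_cast Nat.cast_ne_zero.2 (by omega) : ((a:ℝ) ≠ 0))]
  · intro d hd ih
    rw [Finset.prod_Ico_succ_top hd, ih]
    have hd0 : (0:ℝ) < (d:ℝ) := by exact_mod_cast lt_of_lt_of_le ha hd
    push_cast
    field_simp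

private lemma sumsq (d : ℕ) :
    ∑ i ∈ Finset.range d, (1:ℝ) / (((i:ℝ) + 1) ^ 2) ≤ 2 := by
  have key : ∀ d : ℕ, 1 ≤ d → ∑ i ∈ Finset.range d, (1:ℝ) / (((i:ℝ) + 1) ^ 2) ≤ 2 - 1 / (d:ℝ) := by
    refine Nat.le_induction ?_ ?_
    · norm_num
    · intro n hn ih
      rw [Finset.sum_range_succ]
      have hn0 : (1:ℝ) ≤ (n:ℝ) := by exact_mod_cast hn
      have h1 : (1:ℝ) / (((n:ℝ) + 1) ^ 2) ≤ 1 / (n:ℝ) - 1 / ((n:ℝ) + 1) := by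
        rw [div_sub_div _ _ (by positivity) (by positivity),
          div_le_div_iff₀ (by positivity) (by positivity)]
        nlinarith
      push_cast
      linarith
  rcases Nat.eq_zero_or_pos d with h | h
  · simp [h]
  · have h2 := key d h
    have : (0:ℝ) < (d:ℝ) := by exact_mod_cast h
    have := div_pos one_pos this
    linarith

private noncomputable def PP (t : ℕ → ℝ) (i d : ℕ) : ℝ :=
  ∏ j ∈ Finset.Ico (i + 1) d, (Real.pi - t j) / Real.pi

theorem stmt10 (t : ℕ → ℝ) (h0 : t 0 = Real.pi) (hrec : ∀ i, t (i + 1) = g (t i)) :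
    Filter.Tendsto
      (fun d : ℕ => ∑ i ∈ Finset.range d,
        (Real.sin (t i) / Real.pi) * ∏ j ∈ Finset.Ico (i + 1) d, (Real.pi - t j) / Real.pi)
      Filter.atTop (nhds 1) := by
  have hπ := Real.pi_pos
  have hmem := tmem h0 hrec
  have hlow := tlow h0 hrec
  have hup := tup h0 hrec
  show Filter.Tendsto
      (fun d : ℕ => ∑ i ∈ Finset.range d, (Real.sin (t i) / Real.pi) * PP t i d)
      Filter.atTop (nhds 1)
  -- the telescoping identity
  have hS : ∀ d, 1 ≤ d → ∑ i ∈ Finset.range d, (t i / Real.pi) * PP t i d = 1 := by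
    refine Nat.le_induction ?_ ?_
    · rw [Finset.sum_range_one]
      rw [PP, Finset.Ico_self, Finset.prod_empty, mul_one, h0, div_self hπ.ne']
    · intro d hd ih
      rw [Finset.sum_range_succ]
      have hsplit : ∀ i ∈ Finset.range d,
          (t i / Real.pi) * PP t i (d + 1)
            = ((t i / Real.pi) * PP t i d) * ((Real.pi - t d) / Real.pi) := by
        intro i hi
        rw [Finset.mem_range] at hi
        rw [PP, PP, Finset.prod_Ico_succ_top (Nat.succ_le_of_lt hi)]
        ring
      rw [Finset.sum_congr rfl hsplit, ← Finset.sum_mul, ih]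
      rw [PP, Finset.Ico_self, Finset.prod_empty, mul_one]
      field_simp
      ring
  have hPnonneg : ∀ i d, 0 ≤ PP t i d := fun i d =>
    Finset.prod_nonneg (fun j _ => div_nonneg (by linarith [(hmem j).2]) hπ.le)
  have hPle : ∀ i d : ℕ, i < d → PP t i d ≤ ((i : ℝ) + 1) / d := by
    intro i d hid
    have h1 : PP t i d ≤ ∏ j ∈ Finset.Ico (i + 1) d, ((j : ℝ) / ((j : ℝ) + 1)) := by
      refine Finset.prod_le_prod
        (fun j _ => div_nonneg (by linarith [(hmem j).2]) hπ.le) ?_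
      intro j _
      have hl := hlow j
      have hj1 : (0:ℝ) < (j : ℝ) + 1 := by positivity
      rw [div_le_div_iff₀ hπ hj1]
      have h2 := (div_le_iff₀ hj1).1 hl
      nlinarith
    have h2 := prodIco (i + 1) (Nat.succ_le_succ (Nat.zero_le i)) d hid
    rw [h2] at h1
    push_cast at h1 ⊢
    exact h1
  -- rewrite as 1 - error term
  have hEq : ∀ d, 1 ≤ d →
      ∑ i ∈ Finset.range d, (Real.sin (t i) / Real.pi) * PP t i d
        = 1 - ∑ i ∈ Finset.range d, ((t i - Real.sin (t i)) / Real.pi) * PP t i d := by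
    intro d hd
    rw [← hS d hd, ← Finset.sum_sub_distrib]
    exact Finset.sum_congr rfl (fun i _ => by ring)
  have hE0 : ∀ d : ℕ, 0 ≤ ∑ i ∈ Finset.range d, ((t i - Real.sin (t i)) / Real.pi) * PP t i d := by
    intro d
    refine Finset.sum_nonneg (fun i _ => mul_nonneg (div_nonneg ?_ hπ.le) (hPnonneg i d))
    linarith [Real.sin_le (hmem i).1]
  have hEle : ∀ d : ℕ, 1 ≤ d →
      ∑ i ∈ Finset.range d, ((t i - Real.sin (t i)) / Real.pi) * PP t i d
        ≤ 72 * Real.pi ^ 2 / d := by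
    intro d hd
    have hd0 : (0:ℝ) < (d : ℝ) := by exact_mod_cast hd
    have hterm : ∀ i ∈ Finset.range d,
        ((t i - Real.sin (t i)) / Real.pi) * PP t i d
          ≤ (36 * Real.pi ^ 2 / d) * (1 / (((i : ℝ) + 1) ^ 2)) := by
      intro i hi
      rw [Finset.mem_range] at hi
      have hx : (0:ℝ) < (i : ℝ) + 1 := by positivity
      have hA : (t i - Real.sin (t i)) / Real.pi ≤ 36 * Real.pi ^ 2 / (((i : ℝ) + 1) ^ 3) := by
        have h1 : t i - Real.sin (t i) ≤ t i ^ 3 / 6 := L4 (hmem i).1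
        have h2 : t i ^ 3 ≤ (6 * Real.pi / ((i : ℝ) + 1)) ^ 3 :=
          pow_le_pow_left₀ (hmem i).1 (hup i) 3
        have h3 : (6 * Real.pi / ((i : ℝ) + 1)) ^ 3 / 6 / Real.pi
            = 36 * Real.pi ^ 2 / (((i : ℝ) + 1) ^ 3) := by
          field_simp
          ring
        rw [div_le_iff₀ hπ]
        rw [← h3]
        rw [div_mul_eq_mul_div, le_div_iff₀ hπ]
        nlinarith
      have hB := hPle i d hi
      have hA0 : (0:ℝ) ≤ (t i - Real.sin (t i)) / Real.pi :=
        div_nonneg (by linarith [Real.sin_le (hmem i).1]) hπ.le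
      have := mul_le_mul hA hB (hPnonneg i d) (by positivity)
      calc ((t i - Real.sin (t i)) / Real.pi) * PP t i d
          ≤ (36 * Real.pi ^ 2 / (((i : ℝ) + 1) ^ 3)) * (((i : ℝ) + 1) / d) := this
        _ = (36 * Real.pi ^ 2 / d) * (1 / (((i : ℝ) + 1) ^ 2)) := by
            field_simp
    calc ∑ i ∈ Finset.range d, ((t i - Real.sin (t i)) / Real.pi) * PP t i d
        ≤ ∑ i ∈ Finset.range d, (36 * Real.pi ^ 2 / d) * (1 / (((i : ℝ) + 1) ^ 2)) :=
          Finset.sum_le_sum hterm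
      _ = (36 * Real.pi ^ 2 / d) * ∑ i ∈ Finset.range d, (1 : ℝ) / (((i : ℝ) + 1) ^ 2) := by
          rw [Finset.mul_sum]
      _ ≤ (36 * Real.pi ^ 2 / d) * 2 := by
          refine mul_le_mul_of_nonneg_left (sumsq d) (by positivity)
      _ = 72 * Real.pi ^ 2 / d := by ring
  -- squeeze
  have hlim : Filter.Tendsto (fun d : ℕ => 1 - 72 * Real.pi ^ 2 / d) Filter.atTop (nhds 1) := by
    have h1 : Filter.Tendsto (fun _ : ℕ => (1:ℝ)) Filter.atTop (nhds 1) := tendsto_const_nhds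
    simpa using h1.sub (tendsto_const_div_atTop_nhds_zero_nat (72 * Real.pi ^ 2))
  refine tendsto_of_tendsto_of_tendsto_of_le_of_le' hlim tendsto_const_nhds ?_ ?_
  · refine Filter.eventually_atTop.2 ⟨1, fun d hd => ?_⟩
    rw [hEq d hd]
    linarith [hEle d hd]
  · refine Filter.eventually_atTop.2 ⟨1, fun d hd => ?_⟩
    rw [hEq d hd]
    linarith [hE0 d]
end

section
/- With ρ_d defined as ρ_d = Σ_{i=0}^{d−1} (sin θ̌_i / π) · ∏_{j=i+1}^{d−1} (π − θ̌_j)/π (θ̌_0 = π, θ̌_i = g(θ̌_{i−1})), there exist universal constants such that for all d ≥ 2: 1/(K₁(d+2)²) ≤ 1 − ρ_d ≤ 250/(d+1). -/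
noncomputable def rho (t : ℕ → ℝ) (d : ℕ) : ℝ :=
  ∑ i ∈ Finset.range d,
    (Real.sin (t i) / Real.pi) * ∏ j ∈ Finset.Ico (i + 1) d, (Real.pi - t j) / Real.pi

set_option maxHeartbeats 1000000
open Real

lemma myNonneg (f f' : ℝ → ℝ) (hd : ∀ x, HasDerivAt f (f' x) x)
    (h0 : f 0 = 0) (hf' : ∀ x, 0 ≤ x → 0 ≤ f' x) {x : ℝ} (hx : 0 ≤ x) : 0 ≤ f x := by
  have hmono : MonotoneOn f (Set.Ici 0) := by
    apply monotoneOn_of_deriv_nonneg (convex_Ici 0)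
    · exact fun y _ => (hd y).differentiableAt.continuousAt.continuousWithinAt
    · exact fun y _ => (hd y).differentiableAt.differentiableWithinAt
    · intro y hy
      rw [(hd y).deriv]
      rw [interior_Ici] at hy
      exact hf' y hy.le
  calc (0:ℝ) = f 0 := h0.symm
    _ ≤ f x := hmono (Set.mem_Ici.2 le_rfl) (Set.mem_Ici.2 hx) hx

lemma sin_ge3 {x : ℝ} (hx : 0 ≤ x) : x - x^3/6 ≤ sin x := by
  have h := myNonneg (fun t => sin t - (t - t^3/6)) (fun t => cos t - (1 - 3*t^2/6))
    (fun t => ((Real.hasDerivAt_sin t).sub (((hasDerivAt_id t).sub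
      ((hasDerivAt_pow 3 t).div_const 6)))).congr_deriv (by ring))
    (by simp) (fun t _ => by nlinarith [Real.one_sub_sq_div_two_le_cos (x := t)]) hx
  linarith

lemma cos_le4 {x : ℝ} (hx : 0 ≤ x) : cos x ≤ 1 - x^2/2 + x^4/24 := by
  have h := myNonneg (fun t => 1 - t^2/2 + t^4/24 - cos t)
    (fun t => -(2*t)/2 + 4*t^3/24 + sin t)
    (fun t => ((((hasDerivAt_const t (1:ℝ)).sub ((hasDerivAt_pow 2 t).div_const 2)).add
      ((hasDerivAt_pow 4 t).div_const 24)).sub (Real.hasDerivAt_cos t)).congr_deriv (by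
        push_cast; ring))
    (by norm_num) (fun t ht => by nlinarith [sin_ge3 ht]) hx
  linarith

lemma sin_le5 {x : ℝ} (hx : 0 ≤ x) : sin x ≤ x - x^3/6 + x^5/120 := by
  have h := myNonneg (fun t => t - t^3/6 + t^5/120 - sin t)
    (fun t => 1 - 3*t^2/6 + 5*t^4/120 - cos t)
    (fun t => ((((hasDerivAt_id t).sub ((hasDerivAt_pow 3 t).div_const 6)).add
      ((hasDerivAt_pow 5 t).div_const 120)).sub (Real.hasDerivAt_sin t)).congr_deriv (by
        push_cast; ring))
    (by norm_num) (fun t ht => by nlinarith [cos_le4 ht]) hx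
  linarith

lemma cos_ge6 {x : ℝ} (hx : 0 ≤ x) : 1 - x^2/2 + x^4/24 - x^6/720 ≤ cos x := by
  have h := myNonneg (fun t => cos t - (1 - t^2/2 + t^4/24 - t^6/720))
    (fun t => -sin t - (-(2*t)/2 + 4*t^3/24 - 6*t^5/720))
    (fun t => ((Real.hasDerivAt_cos t).sub ((((hasDerivAt_const t (1:ℝ)).sub
      ((hasDerivAt_pow 2 t).div_const 2)).add ((hasDerivAt_pow 4 t).div_const 24)).sub
      ((hasDerivAt_pow 6 t).div_const 720))).congr_deriv (by push_cast; ring))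
    (by norm_num) (fun t ht => by nlinarith [sin_le5 ht]) hx
  linarith

lemma sin_ge7 {x : ℝ} (hx : 0 ≤ x) : x - x^3/6 + x^5/120 - x^7/5040 ≤ sin x := by
  have h := myNonneg (fun t => sin t - (t - t^3/6 + t^5/120 - t^7/5040))
    (fun t => cos t - (1 - 3*t^2/6 + 5*t^4/120 - 7*t^6/5040))
    (fun t => ((Real.hasDerivAt_sin t).sub ((((hasDerivAt_id t).sub
      ((hasDerivAt_pow 3 t).div_const 6)).add ((hasDerivAt_pow 5 t).div_const 120)).sub
      ((hasDerivAt_pow 7 t).div_const 5040))).congr_deriv (by push_cast; ring))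
    (by norm_num) (fun t ht => by nlinarith [cos_ge6 ht]) hx
  linarith

lemma myArccosLe {a b : ℝ} (h : a ≤ b) : Real.arccos b ≤ Real.arccos a := by
  rw [Real.arccos_eq_pi_div_two_sub_arcsin, Real.arccos_eq_pi_div_two_sub_arcsin]
  exact sub_le_sub_left (Real.monotone_arcsin h) _
lemma certW1 (y : ℝ) (hy0 : 0 ≤ y) (hy1 : y ≤ 4/5) : 0 ≤ (96)*y^5 + (276)*y^6 + (240)*y^7 + (-30)*y^8 + (-180)*y^9 + (-114)*y^10 + (-24)*y^11 := by
  have h45 : (0:ℝ) ≤ 4 - 5*y := by linarith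
  nlinarith [mul_nonneg (mul_nonneg (by norm_num : (0:ℝ) ≤ ((3:ℝ)/128)) (pow_nonneg hy0 5)) (pow_nonneg h45 6), mul_nonneg (mul_nonneg (by norm_num : (0:ℝ) ≤ ((249:ℝ)/256)) (pow_nonneg hy0 6)) (pow_nonneg h45 5), mul_nonneg (mul_nonneg (by norm_num : (0:ℝ) ≤ ((4215:ℝ)/256)) (pow_nonneg hy0 7)) (pow_nonneg h45 4), mul_nonneg (mul_nonneg (by norm_num : (0:ℝ) ≤ ((18465:ℝ)/128)) (pow_nonneg hy0 8)) (pow_nonneg h45 3), mul_nonneg (mul_nonneg (by norm_num : (0:ℝ) ≤ ((43455:ℝ)/64)) (pow_nonneg hy0 9)) (pow_nonneg h45 2), mul_nonneg (mul_nonneg (by norm_num : (0:ℝ) ≤ ((403029:ℝ)/256)) (pow_nonneg hy0 10)) (pow_nonneg h45 1), mul_nonneg (mul_nonneg (by norm_num : (0:ℝ) ≤ ((329751:ℝ)/256)) (pow_nonneg hy0 11)) (pow_nonneg h45 0)]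

lemma certU1 (y : ℝ) (hy0 : 0 ≤ y) (hy1 : y ≤ 4/5) : 0 ≤ (480)*y^3 + (1800)*y^4 + ((757818:ℝ)/625)*y^5 + ((-258144817809:ℝ)/100000000)*y^6 + ((-476091:ℝ)/125)*y^7 + ((-783909:ℝ)/1000)*y^8 + ((768273:ℝ)/500)*y^9 + ((5625729:ℝ)/5000)*y^10 + ((296091:ℝ)/1250)*y^11 := by
  have h45 : (0:ℝ) ≤ 4 - 5*y := by linarith
  nlinarith [mul_nonneg (mul_nonneg (by norm_num : (0:ℝ) ≤ ((15:ℝ)/2048)) (pow_nonneg hy0 3)) (pow_nonneg h45 8), mul_nonneg (mul_nonneg (by norm_num : (0:ℝ) ≤ ((825:ℝ)/2048)) (pow_nonneg hy0 4)) (pow_nonneg h45 7), mul_nonneg (mul_nonneg (by norm_num : (0:ℝ) ≤ ((2965821:ℝ)/320000)) (pow_nonneg hy0 5)) (pow_nonneg h45 6), mul_nonneg (mul_nonneg (by norm_num : (0:ℝ) ≤ ((11807486782191:ℝ)/102400000000)) (pow_nonneg hy0 6)) (pow_nonneg h45 5), mul_nonneg (mul_nonneg (by norm_num : (0:ℝ)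 ≤ ((3416856334191:ℝ)/4096000000)) (pow_nonneg hy0 7)) (pow_nonneg h45 4), mul_nonneg (mul_nonneg (by norm_num : (0:ℝ) ≤ ((1427461068591:ℝ)/409600000)) (pow_nonneg hy0 8)) (pow_nonneg h45 3), mul_nonneg (mul_nonneg (by norm_num : (0:ℝ) ≤ ((632322700911:ℝ)/81920000)) (pow_nonneg hy0 9)) (pow_nonneg h45 2), mul_nonneg (mul_nonneg (by norm_num : (0:ℝ) ≤ ((1171532305323:ℝ)/163840000)) (pow_nonneg hy0 10)) (pow_nonneg h45 1), mul_nonneg (mul_nonneg (by norm_num : (0:ℝ) ≤ ((230346706347:ℝ)/163840000)) (pow_nonneg hy0 11)) (pow_nonneg h45 0)]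

lemma certU2 (y : ℝ) (hy0 : 0 ≤ y) (hy1 : y ≤ 4/5) : 0 ≤ (7520)*y^3 + (228480)*y^4 + ((141923712:ℝ)/625)*y^5 + ((-146756857912:ℝ)/390625)*y^6 + ((-58309280416:ℝ)/390625)*y^7 + ((23322074529:ℝ)/390625)*y^8 + ((17007689504:ℝ)/390625)*y^9 + ((13545939641:ℝ)/1562500)*y^10 + ((456604707:ℝ)/781250)*y^11 := by
  have h45 : (0:ℝ) ≤ 4 - 5*y := by linarith
  nlinarith [mul_nonneg (mul_nonneg (by norm_num : (0:ℝ) ≤ ((235:ℝ)/2048)) (pow_nonneg hy0 3)) (pow_nonneg h45 8), mul_nonneg (mul_nonneg (by norm_num : (0:ℝ) ≤ ((4745:ℝ)/256)) (pow_nonneg hy0 4)) (pow_nonneg h45 7), mul_nonneg (mul_nonneg (by norm_num : (0:ℝ) ≤ ((199631089:ℝ)/320000)) (pow_nonneg hy0 5)) (pow_nonneg h45 6), mul_nonneg (mul_nonneg (by norm_num : (0:ℝ) ≤ ((942078807397:ℝ)/100000000)) (pow_nonneg hy0 6)) (pow_nonneg h45 5), mul_nonneg (mul_nonneg (by norm_num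 : (0:ℝ) ≤ ((30826037446161:ℝ)/400000000)) (pow_nonneg hy0 7)) (pow_nonneg h45 4), mul_nonneg (mul_nonneg (by norm_num : (0:ℝ) ≤ ((36127964304671:ℝ)/100000000)) (pow_nonneg hy0 8)) (pow_nonneg h45 3), mul_nonneg (mul_nonneg (by norm_num : (0:ℝ) ≤ ((191147615703433:ℝ)/200000000)) (pow_nonneg hy0 9)) (pow_nonneg h45 2), mul_nonneg (mul_nonneg (by norm_num : (0:ℝ) ≤ ((129772669839971:ℝ)/100000000)) (pow_nonneg hy0 10)) (pow_nonneg h45 1), mul_nonneg (mul_nonneg (by norm_num : (0:ℝ) ≤ ((548500165635883:ℝ)/800000000)) (pow_nonneg hy0 11)) (pow_nonneg h45 0)]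

lemma certW2 (y : ℝ) (hy0 : 0 ≤ y) (hy1 : y ≤ 4/5) : 0 ≤ (80752)*y^5 + ((-36387904:ℝ)/625)*y^6 + ((-11138272:ℝ)/625)*y^7 + ((9110418:ℝ)/625)*y^8 + ((5619368:ℝ)/625)*y^9 + ((1097993:ℝ)/625)*y^10 + ((74022:ℝ)/625)*y^11 := by
  have h45 : (0:ℝ) ≤ 4 - 5*y := by linarith
  nlinarith [mul_nonneg (mul_nonneg (by norm_num : (0:ℝ) ≤ ((5047:ℝ)/256)) (pow_nonneg hy0 5)) (pow_nonneg h45 6), mul_nonneg (mul_nonneg (by norm_num : (0:ℝ) ≤ ((42767137:ℝ)/80000)) (pow_nonneg hy0 6)) (pow_nonneg h45 5), mul_nonneg (mul_nonneg (by norm_num : (0:ℝ) ≤ ((944327953:ℝ)/160000)) (pow_nonneg hy0 7)) (pow_nonneg h45 4), mul_nonneg (mul_nonneg (by norm_num : (0:ℝ) ≤ ((1356342433:ℝ)/40000)) (pow_nonneg hy0 8)) (pow_nonneg h45 3), mul_nonneg (mul_nonneg (by norm_num : (0:ℝ) ≤ ((17166839793:ℝ)/160000)) (pow_nonneg hy0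 9)) (pow_nonneg h45 2), mul_nonneg (mul_nonneg (by norm_num : (0:ℝ) ≤ ((14424920541:ℝ)/80000)) (pow_nonneg hy0 10)) (pow_nonneg h45 1), mul_nonneg (mul_nonneg (by norm_num : (0:ℝ) ≤ ((21070902967:ℝ)/160000)) (pow_nonneg hy0 11)) (pow_nonneg h45 0)]

lemma certW3 (y : ℝ) (hy0 : 0 ≤ y) (hy1 : y ≤ 4/5) : 0 ≤ (4208)*y^6 + (-256)*y^7 + (864)*y^8 + (464)*y^9 + (89)*y^10 + (6)*y^11 := by
  have h45 : (0:ℝ) ≤ 4 - 5*y := by linarith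
  nlinarith [mul_nonneg (mul_nonneg (by norm_num : (0:ℝ) ≤ ((263:ℝ)/64)) (pow_nonneg hy0 6)) (pow_nonneg h45 5), mul_nonneg (mul_nonneg (by norm_num : (0:ℝ) ≤ ((6511:ℝ)/64)) (pow_nonneg hy0 7)) (pow_nonneg h45 4), mul_nonneg (mul_nonneg (by norm_num : (0:ℝ) ≤ ((32667:ℝ)/32)) (pow_nonneg hy0 8)) (pow_nonneg h45 3), mul_nonneg (mul_nonneg (by norm_num : (0:ℝ) ≤ ((166983:ℝ)/32)) (pow_nonneg hy0 9)) (pow_nonneg h45 2), mul_nonneg (mul_nonneg (by norm_num : (0:ℝ) ≤ ((874659:ℝ)/64)) (pow_nonneg hy0 10)) (pow_nonneg h45 1), mul_nonneg (mul_nonneg (by norm_num : (0:ℝ) ≤ ((943779:ℝ)/64)) (pow_nonneg hy0 11)) (pow_nonneg h45 0)]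

/- C0_1 = (480)*y^3 + (1800)*y^4 + (2160)*y^5 + (240)*y^6 + (-1440)*y^7 + (-1080)*y^8 + (-240)*y^9 -/
/- C1_1 = (-96)*y^5 + (-276)*y^6 + (-240)*y^7 + (30)*y^8 + (180)*y^9 + (114)*y^10 + (24)*y^11 -/
/- C0_2 = (107520)*y^3 + (228480)*y^4 + (120960)*y^5 + (24360)*y^6 + (1680)*y^7 -/
/- C1_2 = (10752)*y^5 + (-22848)*y^6 + (-12768)*y^7 + (-2478)*y^8 + (-168)*y^9 -/
/- C2_2 = (-1792)*y^6 + (-256)*y^7 + (864)*y^8 + (464)*y^9 + (89)*y^10 + (6)*y^11 -/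
lemma key1 (y q w : ℝ) (hy0 : 0 ≤ y) (hy1 : y ≤ 4/5) (hq0 : 0 ≤ q) (hq1 : q ≤ 98697/10000)
    (hw : w*(1+y) = y) :
    w^2/2 - q*w^4/24 + q^2*w^6/720 ≤ (1-y)*(y^2/2 - q*y^4/24) + (y^3/6 - q*y^5/120) := by
  rw [← sub_nonneg]
  have h6 : (0:ℝ) < 720*(1+y)^6 := by positivity
  rw [← mul_nonneg_iff_of_pos_right h6]
  have hw2 : w^2*(1+y)^2 = y^2 := by linear_combination (w*(1+y)+y)*hw
  have hw4 : w^4*(1+y)^4 = y^4 := by linear_combination (w^2*(1+y)^2+y^2)*hw2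
  have hw6 : w^6*(1+y)^6 = y^6 := by
    linear_combination (w^4*(1+y)^4 + w^2*(1+y)^2*y^2 + y^4)*hw2
  have hE : ((1-y)*(y^2/2 - q*y^4/24) + (y^3/6 - q*y^5/120)
        - (w^2/2 - q*w^4/24 + q^2*w^6/720)) * (720*(1+y)^6)
      = ((480)*y^3 + (1800)*y^4 + (2160)*y^5 + (240)*y^6 + (-1440)*y^7 + (-1080)*y^8 + (-240)*y^9)
        + q*((-96)*y^5 + (-276)*y^6 + (-240)*y^7 + (30)*y^8 + (180)*y^9 + (114)*y^10 + (24)*y^11)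
        + q^2*(-(y^6)) := by
    linear_combination (-360*(1+y)^4)*hw2 + (30*q*(1+y)^2)*hw4 + (-q^2)*hw6
  rw [hE]
  have hW := certW1 y hy0 hy1
  have hU := certU1 y hy0 hy1
  have h1 : 0 ≤ (98697/10000 - q) * ((96)*y^5 + (276)*y^6 + (240)*y^7 + (-30)*y^8 + (-180)*y^9
      + (-114)*y^10 + (-24)*y^11) := mul_nonneg (by linarith) hW
  have h2 : 0 ≤ ((98697/10000)^2 - q^2) * y^6 :=
    mul_nonneg (by nlinarith) (by positivity)
  linarith [hU, h1, h2]

lemma key2 (y q z : ℝ) (hy0 : 0 ≤ y) (hy1 : y ≤ 4/5) (hq0 : 98696/10000 ≤ q)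
    (hq1 : q ≤ 98697/10000) (hz : z*(4+y) = 4*y) :
    (1-y)*(y^2/2 - q*y^4/24 + q^2*y^6/720) + (y^3/6 - q*y^5/120 + q^2*y^7/5040)
      ≤ z^2/2 - q*z^4/24 := by
  rw [← sub_nonneg]
  have h4 : (0:ℝ) < 5040*(4+y)^4 := by positivity
  rw [← mul_nonneg_iff_of_pos_right h4]
  have hz2 : z^2*(4+y)^2 = 16*y^2 := by linear_combination (z*(4+y)+4*y)*hz
  have hz4 : z^4*(4+y)^4 = 256*y^4 := by linear_combination (z^2*(4+y)^2+16*y^2)*hz2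
  have hE : (z^2/2 - q*z^4/24 - ((1-y)*(y^2/2 - q*y^4/24 + q^2*y^6/720)
        + (y^3/6 - q*y^5/120 + q^2*y^7/5040))) * (5040*(4+y)^4)
      = ((107520)*y^3 + (228480)*y^4 + (120960)*y^5 + (24360)*y^6 + (1680)*y^7)
        + q*((10752)*y^5 + (-22848)*y^6 + (-12768)*y^7 + (-2478)*y^8 + (-168)*y^9)
        + q^2*((-1792)*y^6 + (-256)*y^7 + (864)*y^8 + (464)*y^9 + (89)*y^10 + (6)*y^11) := by
    linear_combination (2520*(4+y)^2)*hz2 + (-210*q)*hz4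
  rw [hE]
  have hU := certU2 y hy0 hy1
  have hW2 := certW2 y hy0 hy1
  have hW3 := certW3 y hy0 hy1
  have hr0 : 0 ≤ q - 12337/1250 := by linarith
  have hr1 : q - 12337/1250 ≤ 1/10000 := by linarith
  have t1 : 0 ≤ (q - 12337/1250) * ((80752)*y^5 + ((-36387904:ℝ)/625)*y^6 + ((-11138272:ℝ)/625)*y^7
      + ((9110418:ℝ)/625)*y^8 + ((5619368:ℝ)/625)*y^9 + ((1097993:ℝ)/625)*y^10
      + ((74022:ℝ)/625)*y^11) := mul_nonneg hr0 hW2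
  have t2 : 0 ≤ (q - 12337/1250)^2 * ((4208)*y^6 + (-256)*y^7 + (864)*y^8 + (464)*y^9
      + (89)*y^10 + (6)*y^11) := mul_nonneg (sq_nonneg _) hW3
  have hy5 : y^5 ≤ y^3 := pow_le_pow_of_le_one hy0 (by linarith) (by norm_num)
  have hy6 : y^6 ≤ y^3 := pow_le_pow_of_le_one hy0 (by linarith) (by norm_num)
  have hA : (q - 12337/1250)*y^5 ≤ (1/10000)*y^3 :=
    mul_le_mul hr1 hy5 (pow_nonneg hy0 5) (by norm_num)
  have hB : (q - 12337/1250)^2*y^6 ≤ (1/10000)^2*y^3 := by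
    have hsq : (q - 12337/1250)^2 ≤ (1/10000)^2 := by nlinarith
    exact mul_le_mul hsq hy6 (pow_nonneg hy0 6) (by norm_num)
  linarith [hU, t1, t2, hA, hB, pow_nonneg hy0 3]

lemma hq0' : (98696:ℝ)/10000 ≤ π^2 := by
  nlinarith [Real.pi_gt_d6]
lemma hq1' : π^2 ≤ (98697:ℝ)/10000 := by
  nlinarith [Real.pi_lt_d6, Real.pi_gt_d6]

lemma trans1 (p y w : ℝ) (hp : 0 < p)
    (hk : w^2/2 - p^2*w^4/24 + (p^2)^2*w^6/720
      ≤ (1-y)*(y^2/2-p^2*y^4/24)+(y^3/6-p^2*y^5/120)) :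
    (p-p*y)*(1-(p*y)^2/2+(p*y)^4/24) + (p*y-(p*y)^3/6+(p*y)^5/120)
      ≤ (1-(p*w)^2/2+(p*w)^4/24-(p*w)^6/720)*p := by
  nlinarith [mul_le_mul_of_nonneg_left hk (pow_pos hp 3).le]

lemma trans2 (p y z : ℝ) (hp : 0 < p)
    (hk : (1-y)*(y^2/2 - p^2*y^4/24 + (p^2)^2*y^6/720) + (y^3/6 - p^2*y^5/120 + (p^2)^2*y^7/5040)
      ≤ z^2/2 - p^2*z^4/24) :
    (1-(p*z)^2/2+(p*z)^4/24)*p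
      ≤ (p-p*y)*(1-(p*y)^2/2+(p*y)^4/24-(p*y)^6/720) + (p*y-(p*y)^3/6+(p*y)^5/120-(p*y)^7/5040) := by
  nlinarith [mul_le_mul_of_nonneg_left hk (pow_pos hp 3).le]

lemma g_ge (θ : ℝ) (h0 : 0 ≤ θ) (h1 : θ ≤ 4*π/5) : π*θ/(π+θ) ≤ g θ := by
  have hπ := Real.pi_pos
  have hπθ : 0 < π + θ := by linarith
  have hy0 : 0 ≤ θ/π := by positivity
  have hy1 : θ/π ≤ 4/5 := by rw [div_le_iff₀ hπ]; linarith
  have hyθ : π*(θ/π) = θ := by field_simp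
  have hw : (θ/(π+θ))*(1+θ/π) = θ/π := by field_simp
  have hk := key1 (θ/π) (π^2) (θ/(π+θ)) hy0 hy1 (by positivity) hq1' hw
  have hu0 : 0 ≤ π*θ/(π+θ) := by positivity
  have huπ : π*θ/(π+θ) ≤ π := by
    rw [div_le_iff₀ hπθ]; nlinarith
  have huw : π*(θ/(π+θ)) = π*θ/(π+θ) := by rw [mul_div_assoc]
  have hc' := trans1 π (θ/π) (θ/(π+θ)) hπ hk
  rw [hyθ, huw] at hc'
  have hπθ' : 0 ≤ π - θ := by nlinarith
  have hcos : ((π-θ)*Real.cos θ + Real.sin θ)/π ≤ Real.cos (π*θ/(π+θ)) := by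
    rw [div_le_iff₀ hπ]
    have hcθ := cos_le4 h0
    have hsθ := sin_le5 h0
    have hcu := cos_ge6 hu0
    nlinarith [mul_le_mul_of_nonneg_left hcθ hπθ', hc', hcu]
  calc π*θ/(π+θ) = Real.arccos (Real.cos (π*θ/(π+θ))) := (Real.arccos_cos hu0 huπ).symm
    _ ≤ g θ := myArccosLe hcos

lemma g_le (θ : ℝ) (h0 : 0 ≤ θ) (h1 : θ ≤ 4*π/5) : g θ ≤ 4*π*θ/(4*π+θ) := by
  have hπ := Real.pi_pos
  have hπθ : 0 < 4*π + θ := by linarith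
  have hy0 : 0 ≤ θ/π := by positivity
  have hy1 : θ/π ≤ 4/5 := by rw [div_le_iff₀ hπ]; linarith
  have hyθ : π*(θ/π) = θ := by field_simp
  have hz : (4*θ/(4*π+θ))*(4+θ/π) = 4*(θ/π) := by field_simp
  have hk := key2 (θ/π) (π^2) (4*θ/(4*π+θ)) hy0 hy1 hq0' hq1' hz
  have hv0 : 0 ≤ 4*π*θ/(4*π+θ) := by positivity
  have hvπ : 4*π*θ/(4*π+θ) ≤ π := by
    rw [div_le_iff₀ hπθ]; nlinarith
  have hvz : π*(4*θ/(4*π+θ)) = 4*π*θ/(4*π+θ) := by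
    rw [mul_div_assoc']; ring_nf
  have hc' := trans2 π (θ/π) (4*θ/(4*π+θ)) hπ hk
  rw [hyθ, hvz] at hc'
  have hπθ' : 0 ≤ π - θ := by nlinarith
  have hcos : Real.cos (4*π*θ/(4*π+θ)) ≤ ((π-θ)*Real.cos θ + Real.sin θ)/π := by
    rw [le_div_iff₀ hπ]
    have hcθ := cos_ge6 h0
    have hsθ := sin_ge7 h0
    have hcv := cos_le4 hv0
    nlinarith [mul_le_mul_of_nonneg_left hcθ hπθ', hc', hcv]
  calc g θ ≤ Real.arccos (Real.cos (4*π*θ/(4*π+θ))) := myArccosLe hcos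
    _ = 4*π*θ/(4*π+θ) := Real.arccos_cos hv0 hvπ

lemma step_sum (f s : ℕ → ℝ) (n : ℕ) :
    ∑ i ∈ Finset.range (n+1), s i * ∏ j ∈ Finset.Ico (i+1) (n+1), f j
      = (∑ i ∈ Finset.range n, s i * ∏ j ∈ Finset.Ico (i+1) n, f j) * f n + s n := by
  rw [Finset.sum_range_succ, Finset.Ico_self, Finset.prod_empty, mul_one, Finset.sum_mul]
  congr 1
  apply Finset.sum_congr rfl
  intro i hi
  rw [Finset.prod_Ico_succ_top (Nat.succ_le_of_lt (Finset.mem_range.1 hi))]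
  ring

lemma rho_id (t : ℕ → ℝ) (d : ℕ) :
    1 - rho t d = (∑ i ∈ Finset.range d,
        ((t i - Real.sin (t i))/π) * ∏ j ∈ Finset.Ico (i+1) d, (π - t j)/π)
      + ∏ j ∈ Finset.range d, (π - t j)/π := by
  have hπ : (π:ℝ) ≠ 0 := Real.pi_ne_zero
  induction d with
  | zero => simp [rho]
  | succ n ih =>
    unfold rho at ih ⊢
    rw [step_sum (fun j => (π - t j)/π) (fun i => Real.sin (t i)/π) n,
      step_sum (fun j => (π - t j)/π) (fun i => (t i - Real.sin (t i))/π) n,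
      Finset.prod_range_succ]
    have hid : (π - t n)/π + t n/π = 1 := by field_simp; ring
    linear_combination ((π - t n)/π)*ih - hid
lemma master (t : ℕ → ℝ) (h0 : t 0 = π) (d : ℕ) (hd : 0 < d) :
    1 - rho t d = (∑ i ∈ Finset.Ico 1 d,
        ((t i - Real.sin (t i))/π) * ∏ j ∈ Finset.Ico (i+1) d, (π - t j)/π)
      + ∏ j ∈ Finset.Ico 1 d, (π - t j)/π := by
  rw [rho_id]
  have hP : ∏ j ∈ Finset.range d, (π - t j)/π = 0 :=
    Finset.prod_eq_zero (Finset.mem_range.2 hd) (by rw [h0]; simp)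
  rw [hP, add_zero, Finset.range_eq_Ico, Finset.sum_eq_sum_Ico_succ_bot hd]
  rw [h0, Real.sin_pi, sub_zero, div_self Real.pi_ne_zero, one_mul, add_comm]

lemma prod_up (f : ℕ → ℝ) (h0f : ∀ j : ℕ, 1 ≤ j → 0 ≤ f j)
    (h1f : ∀ j : ℕ, 1 ≤ j → f j ≤ (j:ℝ)/((j:ℝ)+1)) (a : ℕ) (ha : 1 ≤ a) :
    ∀ d, a ≤ d → ∏ j ∈ Finset.Ico a d, f j ≤ (a:ℝ)/(d:ℝ) := by
  intro d
  induction d with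
  | zero => intro h; exact absurd h (by omega)
  | succ n ih =>
    intro h
    rcases Nat.lt_or_ge a (n+1) with hl | hg
    · have han : a ≤ n := by omega
      have hn1 : 1 ≤ n := le_trans ha han
      have hn0 : (0:ℝ) < (n:ℝ) := by exact_mod_cast hn1
      rw [Finset.prod_Ico_succ_top han]
      have hP0 : 0 ≤ ∏ j ∈ Finset.Ico a n, f j :=
        Finset.prod_nonneg (fun j hj => h0f j (le_trans ha (Finset.mem_Ico.1 hj).1))
      calc (∏ j ∈ Finset.Ico a n, f j) * f n ≤ ((a:ℝ)/(n:ℝ)) * ((n:ℝ)/((n:ℝ)+1)) :=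
            mul_le_mul (ih han) (h1f n hn1) (h0f n hn1) (by positivity)
        _ = (a:ℝ)/((n:ℝ)+1) := by field_simp
        _ = (a:ℝ)/(((n+1:ℕ)):ℝ) := by push_cast; ring
    · have hae : a = n+1 := by omega
      rw [hae, Finset.Ico_self, Finset.prod_empty]
      rw [div_self (by exact_mod_cast Nat.succ_ne_zero n : ((n+1:ℕ):ℝ) ≠ 0)]

lemma prod_low (f : ℕ → ℝ) (h1f : ∀ j : ℕ, 1 ≤ j → (j:ℝ)/((j:ℝ)+4) ≤ f j) (a : ℕ) (ha : 1 ≤ a) :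
    ∀ d, a ≤ d →
      ((a:ℝ)*((a:ℝ)+1)*((a:ℝ)+2)*((a:ℝ)+3))/((d:ℝ)*((d:ℝ)+1)*((d:ℝ)+2)*((d:ℝ)+3))
        ≤ ∏ j ∈ Finset.Ico a d, f j := by
  intro d
  induction d with
  | zero => intro h; exact absurd h (by omega)
  | succ n ih =>
    intro h
    rcases Nat.lt_or_ge a (n+1) with hl | hg
    · have han : a ≤ n := by omega
      have hn1 : 1 ≤ n := le_trans ha han
      have hn0 : (0:ℝ) < (n:ℝ) := by exact_mod_cast hn1
      rw [Finset.prod_Ico_succ_top han]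
      have hP0 : 0 ≤ ∏ j ∈ Finset.Ico a n, f j :=
        Finset.prod_nonneg (fun j hj =>
          le_trans (by positivity) (h1f j (le_trans ha (Finset.mem_Ico.1 hj).1)))
      have ha0 : (0:ℝ) < (a:ℝ) := by exact_mod_cast ha
      calc ((a:ℝ)*((a:ℝ)+1)*((a:ℝ)+2)*((a:ℝ)+3))
            /((((n+1:ℕ)):ℝ)*((((n+1:ℕ)):ℝ)+1)*((((n+1:ℕ)):ℝ)+2)*((((n+1:ℕ)):ℝ)+3))
          = (((a:ℝ)*((a:ℝ)+1)*((a:ℝ)+2)*((a:ℝ)+3))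
            /((n:ℝ)*((n:ℝ)+1)*((n:ℝ)+2)*((n:ℝ)+3))) * ((n:ℝ)/((n:ℝ)+4)) := by
            push_cast; field_simp; ring
        _ ≤ (∏ j ∈ Finset.Ico a n, f j) * f n :=
            mul_le_mul (ih han) (h1f n hn1) (by positivity) hP0
    · have hae : a = n+1 := by omega
      rw [hae, Finset.Ico_self, Finset.prod_empty]
      rw [div_self (by push_cast; positivity)]

lemma tele : ∀ d : ℕ, 1 ≤ d →
    ∑ i ∈ Finset.Ico 1 d, (1/((i:ℝ)+3) - 1/((i:ℝ)+4)) ≤ 1/4 - 1/((d:ℝ)+3) := by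
  intro d
  induction d with
  | zero => intro h; omega
  | succ n ih =>
    intro _
    rcases Nat.lt_or_ge 1 (n+1) with hl | hg
    · have hn1 : 1 ≤ n := by omega
      rw [Finset.sum_Ico_succ_top hn1]
      have hn0 : (0:ℝ) ≤ (n:ℝ) := by positivity
      have := ih hn1
      push_cast
      have e1 : (0:ℝ) < (n:ℝ)+3 := by linarith
      rw [show ((n:ℝ)+1+3) = ((n:ℝ)+4) from by ring]
      linarith
    · have : n = 0 := by omega
      subst this
      rw [Finset.Ico_self, Finset.sum_empty]
      norm_num
lemma gauss : ∀ d : ℕ, 1 ≤ d →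
    (d:ℝ)*((d:ℝ)+1)/2 - 1 ≤ ∑ i ∈ Finset.Ico 1 d, ((i:ℝ)+1) := by
  intro d
  induction d with
  | zero => intro h; omega
  | succ n ih =>
    intro _
    rcases Nat.lt_or_ge 1 (n+1) with hl | hg
    · have hn1 : 1 ≤ n := by omega
      rw [Finset.sum_Ico_succ_top hn1]
      have := ih hn1
      push_cast
      nlinarith [this]
    · have : n = 0 := by omega
      subst this
      rw [Finset.Ico_self, Finset.sum_empty]
      norm_num

lemma cube_low {x : ℝ} (h0 : 0 ≤ x) (h3 : x ≤ 3) : x^3/12 ≤ x - Real.sin x := by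
  have h := sin_le5 h0
  nlinarith [mul_nonneg (pow_nonneg h0 3) (by nlinarith : (0:ℝ) ≤ 10 - x^2)]
theorem stmt11 (t : ℕ → ℝ) (h0 : t 0 = Real.pi) (hrec : ∀ i, t (i + 1) = g (t i)) :
    ∃ K₁ : ℝ, 0 < K₁ ∧ ∀ d : ℕ, 2 ≤ d →
      1 / (K₁ * ((d : ℝ) + 2) ^ 2) ≤ 1 - rho t d ∧ 1 - rho t d ≤ 250 / ((d : ℝ) + 1) := by
  have hπ := Real.pi_pos
  have ht1 : t 1 = π/2 := by
    rw [hrec 0, h0]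
    unfold g
    norm_num [Real.sin_pi, Real.arccos_zero]
  have hbd : ∀ i : ℕ, 1 ≤ i → π/((i:ℝ)+1) ≤ t i ∧ t i ≤ 4*π/((i:ℝ)+4) := by
    intro i hi
    induction i, hi using Nat.le_induction with
    | base =>
      constructor
      · rw [ht1]; norm_num
      · rw [ht1]; rw [div_le_div_iff₀ (by norm_num) (by norm_num)]; push_cast; nlinarith
    | succ n hn ih =>
      obtain ⟨hl, hu⟩ := ih
      have hn1 : (1:ℝ) ≤ (n:ℝ) := by exact_mod_cast hn
      have ht0 : 0 ≤ t n := le_trans (by positivity) hl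
      have htu : t n ≤ 4*π/5 := by
        refine le_trans hu ?_
        rw [div_le_div_iff₀ (by linarith) (by norm_num)]
        nlinarith
      have hl' : π ≤ t n*((n:ℝ)+1) := by
        rw [div_le_iff₀ (by linarith)] at hl; linarith
      have hu' : t n*((n:ℝ)+4) ≤ 4*π := by
        rw [le_div_iff₀ (by linarith)] at hu; linarith
      rw [hrec n]
      constructor
      · refine le_trans ?_ (g_ge (t n) ht0 htu)
        rw [div_le_div_iff₀ (by push_cast; linarith) (by linarith)]
        push_cast
        nlinarith [mul_le_mul_of_nonneg_left hl' hπ.le]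
      · refine le_trans (g_le (t n) ht0 htu) ?_
        rw [div_le_div_iff₀ (by linarith) (by push_cast; linarith)]
        push_cast
        nlinarith [mul_le_mul_of_nonneg_left hu' (by positivity : (0:ℝ) ≤ 4*π)]
  have hcast : ∀ j : ℕ, 1 ≤ j → (1:ℝ) ≤ (j:ℝ) := fun j hj => by exact_mod_cast hj
  have htpos : ∀ j : ℕ, 1 ≤ j → 0 ≤ t j :=
    fun j hj => le_trans (by positivity) (hbd j hj).1
  have htle : ∀ j : ℕ, 1 ≤ j → t j ≤ 4*π/5 := by
    intro j hj
    refine le_trans (hbd j hj).2 ?_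
    have := hcast j hj
    rw [div_le_div_iff₀ (by linarith) (by norm_num)]
    nlinarith
  have hF0 : ∀ j : ℕ, 1 ≤ j → 0 ≤ (π - t j)/π := by
    intro j hj
    have h1 := htle j hj
    have : t j ≤ π := by nlinarith
    exact div_nonneg (by linarith) hπ.le
  have hFu : ∀ j : ℕ, 1 ≤ j → (π - t j)/π ≤ (j:ℝ)/((j:ℝ)+1) := by
    intro j hj
    have hj1 := hcast j hj
    have hl := (hbd j hj).1
    have hl' : π ≤ t j*((j:ℝ)+1) := by
      rw [div_le_iff₀ (by linarith)] at hl; linarith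
    rw [div_le_div_iff₀ hπ (by linarith)]
    nlinarith
  have hFl : ∀ j : ℕ, 1 ≤ j → (j:ℝ)/((j:ℝ)+4) ≤ (π - t j)/π := by
    intro j hj
    have hj1 := hcast j hj
    have hu := (hbd j hj).2
    have hu' : t j*((j:ℝ)+4) ≤ 4*π := by
      rw [le_div_iff₀ (by linarith)] at hu; linarith
    rw [div_le_div_iff₀ (by linarith) hπ]
    nlinarith
  refine ⟨10, by norm_num, ?_⟩
  intro d hd
  have hd1 : 0 < d := by omega
  have hd2 : (2:ℝ) ≤ (d:ℝ) := by exact_mod_cast hd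
  have hdpos : (0:ℝ) < (d:ℝ) := by linarith
  have hM := master t h0 d hd1
  have hProdNN : ∀ a : ℕ, 1 ≤ a → 0 ≤ ∏ j ∈ Finset.Ico a d, (π - t j)/π := by
    intro a ha
    exact Finset.prod_nonneg (fun j hj => hF0 j (le_trans ha (Finset.mem_Ico.1 hj).1))
  have hTermNN : ∀ i : ℕ, 1 ≤ i → 0 ≤ (t i - Real.sin (t i))/π := by
    intro i hi
    exact div_nonneg (by nlinarith [Real.sin_le (htpos i hi)]) hπ.le
  constructor
  · -- LOWER BOUND
    have hSum : ∑ i ∈ Finset.Ico 1 d,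
          (π^2/(12*((d:ℝ)*((d:ℝ)+1)*((d:ℝ)+2)*((d:ℝ)+3))))*((i:ℝ)+1)
        ≤ ∑ i ∈ Finset.Ico 1 d,
          ((t i - Real.sin (t i))/π) * ∏ j ∈ Finset.Ico (i+1) d, (π - t j)/π := by
      apply Finset.sum_le_sum
      intro i hi
      obtain ⟨hi1, hid⟩ := Finset.mem_Ico.1 hi
      have hi1R := hcast i hi1
      have ht0 := htpos i hi1
      have hDpos : (0:ℝ) < (d:ℝ)*((d:ℝ)+1)*((d:ℝ)+2)*((d:ℝ)+3) := by positivity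
      have hsin : (t i)^3/12 ≤ t i - Real.sin (t i) :=
        cube_low ht0 (by nlinarith [htle i hi1, Real.pi_lt_d2])
      have hl := (hbd i hi1).1
      have hl' : π ≤ t i*((i:ℝ)+1) := by
        rw [div_le_iff₀ (by linarith)] at hl; linarith
      have ht3 : π^3 ≤ (t i)^3*((i:ℝ)+1)^3 := by
        calc π^3 ≤ (t i*((i:ℝ)+1))^3 := pow_le_pow_left₀ hπ.le hl' 3
          _ = (t i)^3*((i:ℝ)+1)^3 := by ring
      have hterm1 : π^2/(12*((i:ℝ)+1)^3) ≤ (t i - Real.sin (t i))/π := by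
        rw [div_le_div_iff₀ (by positivity) hπ]
        nlinarith [mul_le_mul_of_nonneg_right hsin (by positivity : (0:ℝ) ≤ 12*((i:ℝ)+1)^3)]
      have hterm2 := prod_low (fun j => (π - t j)/π) hFl (i+1) (by omega) d (by omega)
      push_cast at hterm2
      have hAc : (((i:ℝ)+1)*((i:ℝ)+1)^3)/((d:ℝ)*((d:ℝ)+1)*((d:ℝ)+2)*((d:ℝ)+3))
          ≤ (((i:ℝ)+1)*(((i:ℝ)+1)+1)*(((i:ℝ)+1)+2)*(((i:ℝ)+1)+3))
            /((d:ℝ)*((d:ℝ)+1)*((d:ℝ)+2)*((d:ℝ)+3)) :=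
        (div_le_div_iff_of_pos_right hDpos).2 (by
          have hx0 : (0:ℝ) ≤ (i:ℝ)+1 := by linarith
          nlinarith [pow_nonneg hx0 3, sq_nonneg ((i:ℝ)+1), hi1R])
      calc (π^2/(12*((d:ℝ)*((d:ℝ)+1)*((d:ℝ)+2)*((d:ℝ)+3))))*((i:ℝ)+1)
          = (π^2/(12*((i:ℝ)+1)^3))
            *((((i:ℝ)+1)*((i:ℝ)+1)^3)/((d:ℝ)*((d:ℝ)+1)*((d:ℝ)+2)*((d:ℝ)+3))) := by
            field_simp
        _ ≤ (π^2/(12*((i:ℝ)+1)^3))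
            *((((i:ℝ)+1)*(((i:ℝ)+1)+1)*(((i:ℝ)+1)+2)*(((i:ℝ)+1)+3))
              /((d:ℝ)*((d:ℝ)+1)*((d:ℝ)+2)*((d:ℝ)+3))) :=
            mul_le_mul_of_nonneg_left hAc (by positivity)
        _ ≤ ((t i - Real.sin (t i))/π) * ∏ j ∈ Finset.Ico (i+1) d, (π - t j)/π :=
            mul_le_mul hterm1 hterm2 (by positivity) (hTermNN i hi1)
    have hGauss := gauss d (by omega)
    have hP := hProdNN 1 le_rfl
    rw [hM]
    rw [← Finset.mul_sum] at hSum
    have hDpos : (0:ℝ) < (d:ℝ)*((d:ℝ)+1)*((d:ℝ)+2)*((d:ℝ)+3) := by positivity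
    have hlow := mul_le_mul_of_nonneg_left hGauss
      (by positivity : (0:ℝ) ≤ π^2/(12*((d:ℝ)*((d:ℝ)+1)*((d:ℝ)+2)*((d:ℝ)+3))))
    have hfinal : 1/(10*((d:ℝ)+2)^2)
        ≤ (π^2/(12*((d:ℝ)*((d:ℝ)+1)*((d:ℝ)+2)*((d:ℝ)+3))))*((d:ℝ)*((d:ℝ)+1)/2 - 1) := by
      have e : (π^2/(12*((d:ℝ)*((d:ℝ)+1)*((d:ℝ)+2)*((d:ℝ)+3))))*((d:ℝ)*((d:ℝ)+1)/2 - 1)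
          = (π^2*((d:ℝ)*((d:ℝ)+1)/2 - 1))/(12*((d:ℝ)*((d:ℝ)+1)*((d:ℝ)+2)*((d:ℝ)+3))) := by
        ring
      rw [e, div_le_div_iff₀ (by positivity) (by positivity)]
      have hx2 : (0:ℝ) ≤ (d:ℝ) - 2 := by linarith
      have hg : (0:ℝ) ≤ ((d:ℝ)*((d:ℝ)+1)/2 - 1)*((d:ℝ)+2)^2 := by
        nlinarith [sq_nonneg ((d:ℝ)+2), hx2]
      have hqm := mul_nonneg (sub_nonneg.2 hq0') hg
      nlinarith [hqm, hx2, mul_nonneg hx2 hx2, mul_nonneg (mul_nonneg hx2 hx2) hx2,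
        mul_nonneg (mul_nonneg hx2 hx2) (mul_nonneg hx2 hx2)]
    linarith
  · -- UPPER BOUND
    have hProd := prod_up (fun j => (π - t j)/π) hF0 hFu 1 le_rfl d (by omega)
    rw [Nat.cast_one] at hProd
    have hSum : ∑ i ∈ Finset.Ico 1 d,
          ((t i - Real.sin (t i))/π) * ∏ j ∈ Finset.Ico (i+1) d, (π - t j)/π
        ≤ ∑ i ∈ Finset.Ico 1 d, (32*π^2/(3*(d:ℝ)))*(1/((i:ℝ)+3) - 1/((i:ℝ)+4)) := by
      apply Finset.sum_le_sum
      intro i hi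
      obtain ⟨hi1, hid⟩ := Finset.mem_Ico.1 hi
      have hi1R := hcast i hi1
      have ht0 := htpos i hi1
      have hsinu : t i - Real.sin (t i) ≤ (t i)^3/6 := by
        nlinarith [sin_ge3 ht0]
      have hu := (hbd i hi1).2
      have hu' : t i*((i:ℝ)+4) ≤ 4*π := by
        rw [le_div_iff₀ (by linarith)] at hu; linarith
      have ht3u : (t i)^3*((i:ℝ)+4)^3 ≤ 64*π^3 := by
        calc (t i)^3*((i:ℝ)+4)^3 = (t i*((i:ℝ)+4))^3 := by ring
          _ ≤ (4*π)^3 := pow_le_pow_left₀ (by positivity) hu' 3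
          _ = 64*π^3 := by ring
      have hterm1u : (t i - Real.sin (t i))/π ≤ 32*π^2/(3*((i:ℝ)+4)^3) := by
        rw [div_le_div_iff₀ hπ (by positivity)]
        nlinarith [mul_le_mul_of_nonneg_right hsinu (by positivity : (0:ℝ) ≤ 3*((i:ℝ)+4)^3)]
      have hterm2u := prod_up (fun j => (π - t j)/π) hF0 hFu (i+1) (by omega) d (by omega)
      push_cast at hterm2u
      calc ((t i - Real.sin (t i))/π) * ∏ j ∈ Finset.Ico (i+1) d, (π - t j)/π
          ≤ (32*π^2/(3*((i:ℝ)+4)^3))*(((i:ℝ)+1)/(d:ℝ)) :=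
            mul_le_mul hterm1u hterm2u (hProdNN (i+1) (by omega)) (by positivity)
        _ ≤ (32*π^2/(3*(d:ℝ)))*(1/((i:ℝ)+3) - 1/((i:ℝ)+4)) := by
            have eL : (32*π^2/(3*((i:ℝ)+4)^3))*(((i:ℝ)+1)/(d:ℝ))
                = (32*π^2*((i:ℝ)+1))/((3*((i:ℝ)+4)^3)*(d:ℝ)) := by
              rw [div_mul_div_comm]
            have eR : (32*π^2/(3*(d:ℝ)))*(1/((i:ℝ)+3) - 1/((i:ℝ)+4))
                = (32*π^2)/((3*(d:ℝ))*(((i:ℝ)+3)*((i:ℝ)+4))) := by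
              field_simp
              ring
            rw [eL, eR, div_le_div_iff₀ (by positivity) (by positivity)]
            have hpoly : ((i:ℝ)+1)*(((i:ℝ)+3)*((i:ℝ)+4)) ≤ ((i:ℝ)+4)^3 := by nlinarith
            nlinarith [mul_le_mul_of_nonneg_left hpoly
              (by positivity : (0:ℝ) ≤ 96*π^2*(d:ℝ))]
    rw [hM]
    rw [← Finset.mul_sum] at hSum
    have hTele := tele d (by omega)
    have h1 := mul_le_mul_of_nonneg_left hTele (by positivity : (0:ℝ) ≤ 32*π^2/(3*(d:ℝ)))
    have h2 : (32*π^2/(3*(d:ℝ)))*(1/4 - 1/((d:ℝ)+3)) ≤ (32*π^2/(3*(d:ℝ)))*(1/4) :=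
      mul_le_mul_of_nonneg_left (by nlinarith [(by positivity : (0:ℝ) < 1/((d:ℝ)+3))])
        (by positivity)
    have h3 : (32*π^2/(3*(d:ℝ)))*(1/4) + 1/(d:ℝ) ≤ 250/((d:ℝ)+1) := by
      have e : (32*π^2/(3*(d:ℝ)))*(1/4) + 1/(d:ℝ) = (8*π^2/3 + 1)/(d:ℝ) := by
        field_simp; ring
      rw [e, div_le_div_iff₀ hdpos (by linarith)]
      nlinarith [hq1', hd2]
    linarith
end

section
/- Suppose W ∈ ℝ^{n×k} satisfies the Weight Distribution Condition with constant ε. Then for any nonzero x, y ∈ ℝ^k with angle θ = ∠(x,y), we have ‖W_{+,x} x − W_{+,y} y‖ ≤ (√(1/2 + ε) + √(2(2ε + θ))) ‖x − y‖. -/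
open Matrix

noncomputable section

/-- Euclidean norm on `Fin k → ℝ`. -/
def vnorm {k : ℕ} (x : Fin k → ℝ) : ℝ := Real.sqrt (∑ i, x i ^ 2)

/-- Angle between two vectors of `Fin k → ℝ` (with Euclidean inner product). -/
def ang {k : ℕ} (x y : Fin k → ℝ) : ℝ := Real.arccos ((x ⬝ᵥ y) / (vnorm x * vnorm y))

/-- ℓ²→ℓ² operator (spectral) norm of a matrix. -/
def opNorm {m k : ℕ} (M : Matrix (Fin m) (Fin k) ℝ) : ℝ :=
  ‖LinearMap.toContinuousLinearMap (Matrix.toEuclideanLin M)‖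

/-- `W_{+,x} = diag(Wx > 0) W`: keeps only rows of `W` with positive dot product with `x`. -/
def Wplus {m k : ℕ} (W : Matrix (Fin m) (Fin k) ℝ) (x : Fin k → ℝ) :
    Matrix (Fin m) (Fin k) ℝ :=
  Matrix.of fun i j => if 0 < W i ⬝ᵥ x then W i j else 0

/-- The Weight Distribution Condition with constant ε. The matrix `M` is the (unique) symmetric
matrix sending `x̂ ↦ ŷ`, `ŷ ↦ x̂` and vanishing on `span{x,y}ᗮ`. -/
def WDC {m k : ℕ} (W : Matrix (Fin m) (Fin k) ℝ) (ε : ℝ) : Prop :=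
  ∀ x y : Fin k → ℝ, x ≠ 0 → y ≠ 0 →
    ∃ M : Matrix (Fin k) (Fin k) ℝ, M.IsSymm ∧
      M.mulVec ((vnorm x)⁻¹ • x) = (vnorm y)⁻¹ • y ∧
      M.mulVec ((vnorm y)⁻¹ • y) = (vnorm x)⁻¹ • x ∧
      (∀ z : Fin k → ℝ, x ⬝ᵥ z = 0 → y ⬝ᵥ z = 0 → M.mulVec z = 0) ∧
      opNorm ((∑ i : Fin m,
          if 0 < W i ⬝ᵥ x ∧ 0 < W i ⬝ᵥ y then vecMulVec (W i) (W i) else 0) -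
        (((Real.pi - ang x y) / (2 * Real.pi)) • (1 : Matrix (Fin k) (Fin k) ℝ) +
          (Real.sin (ang x y) / (2 * Real.pi)) • M)) ≤ ε

/-! ### Auxiliary lemmas -/

/-- The identity linear equivalence between `Fin k → ℝ` and `EuclideanSpace ℝ (Fin k)`. -/
def ee {k : ℕ} : (Fin k → ℝ) ≃ₗ[ℝ] EuclideanSpace ℝ (Fin k) :=
  (WithLp.linearEquiv 2 ℝ (Fin k → ℝ)).symm

lemma ee_apply {k : ℕ} (v : Fin k → ℝ) (i : Fin k) : ee v i = v i := rfl

lemma vnorm_eq {k : ℕ} (v : Fin k → ℝ) : vnorm v = ‖ee v‖ := by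
  rw [EuclideanSpace.norm_eq]
  simp [vnorm, ee_apply, Real.norm_eq_abs, sq_abs]

lemma dot_eq_inner {k : ℕ} (u v : Fin k → ℝ) : u ⬝ᵥ v = (inner ℝ (ee u) (ee v) : ℝ) := by
  simp [dotProduct, PiLp.inner_apply, RCLike.inner_apply, conj_trivial, ee_apply, mul_comm]

lemma vnorm_sq {k : ℕ} (v : Fin k → ℝ) : vnorm v ^ 2 = v ⬝ᵥ v := by
  rw [vnorm, Real.sq_sqrt (by positivity)]
  simp [dotProduct, sq]

lemma vnorm_nonneg {k : ℕ} (v : Fin k → ℝ) : 0 ≤ vnorm v := Real.sqrt_nonneg _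

lemma vnorm_pos {k : ℕ} {v : Fin k → ℝ} (hv : v ≠ 0) : 0 < vnorm v := by
  rw [vnorm_eq]
  simpa using (ee (k := k)).map_ne_zero_iff.mpr hv

lemma mulVec_vnorm_le {m k : ℕ} (M : Matrix (Fin m) (Fin k) ℝ) (v : Fin k → ℝ) :
    vnorm (M.mulVec v) ≤ opNorm M * vnorm v := by
  have h := (LinearMap.toContinuousLinearMap (Matrix.toEuclideanLin M)).le_opNorm (ee v)
  simpa [vnorm_eq, opNorm, ee, Matrix.toEuclideanLin_apply_piLp_toLp] using h

lemma dot_abs_le {k : ℕ} (u v : Fin k → ℝ) : |u ⬝ᵥ v| ≤ vnorm u * vnorm v := by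
  rw [dot_eq_inner, vnorm_eq, vnorm_eq]
  exact abs_real_inner_le_norm _ _

lemma quad_abs_le {k : ℕ} (M : Matrix (Fin k) (Fin k) ℝ) (v : Fin k → ℝ) :
    |v ⬝ᵥ M.mulVec v| ≤ opNorm M * vnorm v ^ 2 := by
  calc |v ⬝ᵥ M.mulVec v| ≤ vnorm v * vnorm (M.mulVec v) := dot_abs_le _ _
    _ ≤ vnorm v * (opNorm M * vnorm v) :=
        mul_le_mul_of_nonneg_left (mulVec_vnorm_le M v) (vnorm_nonneg v)
    _ = opNorm M * vnorm v ^ 2 := by ring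

lemma dot_sum {m k : ℕ} (v : Fin k → ℝ) (f : Fin m → (Fin k → ℝ)) :
    v ⬝ᵥ (∑ i, f i) = ∑ i, v ⬝ᵥ f i := by
  simp only [dotProduct, Finset.sum_apply, Finset.mul_sum]
  exact Finset.sum_comm

lemma vecMulVec_mulVec' {k : ℕ} (w v : Fin k → ℝ) :
    (vecMulVec w w).mulVec v = (w ⬝ᵥ v) • w := by
  ext j
  simp only [vecMulVec_apply, mulVec, dotProduct, Pi.smul_apply, smul_eq_mul, Finset.sum_mul]
  exact Finset.sum_congr rfl fun l _ => by ring

lemma quad_sum {m k : ℕ} (w : Fin m → Fin k → ℝ) (P : Fin m → Prop) [DecidablePred P]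
    (v : Fin k → ℝ) :
    v ⬝ᵥ (∑ i, if P i then vecMulVec (w i) (w i) else 0).mulVec v
      = ∑ i, if P i then (w i ⬝ᵥ v) ^ 2 else 0 := by
  have h1 : (∑ i, if P i then vecMulVec (w i) (w i) else 0).mulVec v
      = ∑ i, (if P i then vecMulVec (w i) (w i) else 0).mulVec v := by
    ext j
    simp only [mulVec, dotProduct, Matrix.sum_apply, Finset.sum_apply, Finset.sum_mul]
    rw [Finset.sum_comm]
  rw [h1, dot_sum]
  refine Finset.sum_congr rfl fun i _ => ?_
  by_cases h : P i
  · simp only [h, if_true, vecMulVec_mulVec', dotProduct_smul, smul_eq_mul,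
      dotProduct_comm v (w i), sq]
  · simp [h]

/-- Quadratic form of the symmetric matrix `M` from the WDC is bounded by the squared norm. -/
lemma Mbound {k : ℕ} {x y : Fin k → ℝ} (hx : x ≠ 0) (hy : y ≠ 0)
    (M : Matrix (Fin k) (Fin k) ℝ)
    (hMx : M.mulVec ((vnorm x)⁻¹ • x) = (vnorm y)⁻¹ • y)
    (hMy : M.mulVec ((vnorm y)⁻¹ • y) = (vnorm x)⁻¹ • x)
    (hMperp : ∀ z : Fin k → ℝ, x ⬝ᵥ z = 0 → y ⬝ᵥ z = 0 → M.mulVec z = 0)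
    (z : Fin k → ℝ) : |z ⬝ᵥ M.mulVec z| ≤ vnorm z ^ 2 := by
  set nx := vnorm x with hnxdef
  set ny := vnorm y with hnydef
  have hnx : 0 < nx := vnorm_pos hx
  have hny : 0 < ny := vnorm_pos hy
  have hMx' : M.mulVec x = (nx * ny⁻¹) • y := by
    have h1 : M.mulVec x = nx • M.mulVec (nx⁻¹ • x) := by
      rw [mulVec_smul, smul_smul, mul_inv_cancel₀ hnx.ne', one_smul]
    rw [h1, hMx, smul_smul]
  have hMy' : M.mulVec y = (ny * nx⁻¹) • x := by
    have h1 : M.mulVec y = ny • M.mulVec (ny⁻¹ • y) := by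
      rw [mulVec_smul, smul_smul, mul_inv_cancel₀ hny.ne', one_smul]
    rw [h1, hMy, smul_smul]
  set S : Submodule ℝ (EuclideanSpace ℝ (Fin k)) := Submodule.span ℝ {ee x, ee y} with hS
  set p : EuclideanSpace ℝ (Fin k) := (S.orthogonalProjectionOnto (ee z) : EuclideanSpace ℝ (Fin k))
    with hp
  have hpS : p ∈ S := (S.orthogonalProjectionOnto (ee z)).2
  have hw : ee z - p ∈ Sᗮ := S.sub_starProjection_mem_orthogonal (ee z)
  set w : Fin k → ℝ := ee.symm (ee z - p) with hwdef
  have hxw : x ⬝ᵥ w = 0 := by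
    rw [dot_eq_inner]
    have : ee w = ee z - p := ee.apply_symm_apply _
    rw [this]
    exact (Submodule.mem_orthogonal S _).mp hw _ (Submodule.subset_span (by simp))
  have hyw : y ⬝ᵥ w = 0 := by
    rw [dot_eq_inner]
    have : ee w = ee z - p := ee.apply_symm_apply _
    rw [this]
    exact (Submodule.mem_orthogonal S _).mp hw _ (Submodule.subset_span (by simp))
  obtain ⟨a, b, hab⟩ := Submodule.mem_span_pair.mp hpS
  have hzdec : z = a • x + b • y + w := by
    apply ee.injective
    rw [map_add, map_add, _root_.map_smul, _root_.map_smul, ee.apply_symm_apply]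
    rw [hab]
    abel
  have hMz : M.mulVec z = (a * (nx * ny⁻¹)) • y + (b * (ny * nx⁻¹)) • x := by
    rw [hzdec]
    rw [mulVec_add, mulVec_add, mulVec_smul, mulVec_smul, hMx', hMy',
      hMperp w hxw hyw, add_zero, smul_smul, smul_smul]
  have hXX : x ⬝ᵥ x = nx ^ 2 := (vnorm_sq x).symm
  have hYY : y ⬝ᵥ y = ny ^ 2 := (vnorm_sq y).symm
  have hpnorm : vnorm (a • x + b • y) = ‖p‖ := by
    rw [vnorm_eq, map_add, _root_.map_smul, _root_.map_smul, hab]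
  have hMznorm : vnorm (M.mulVec z) = ‖p‖ := by
    have hsq : vnorm (M.mulVec z) ^ 2 = vnorm (a • x + b • y) ^ 2 := by
      rw [vnorm_sq, vnorm_sq, hMz]
      simp only [add_dotProduct, dotProduct_add, smul_dotProduct, dotProduct_smul,
        smul_eq_mul, dotProduct_comm y x]
      rw [hXX, hYY]
      field_simp
    have h1 := vnorm_nonneg (M.mulVec z)
    have h2 := vnorm_nonneg (a • x + b • y)
    rw [← hpnorm]
    nlinarith [sq_nonneg (vnorm (M.mulVec z) - vnorm (a • x + b • y))]
  have hple : ‖p‖ ≤ vnorm z := by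
    rw [vnorm_eq]
    calc ‖p‖ ≤ ‖S.orthogonalProjectionOnto‖ * ‖ee z‖ :=
          (S.orthogonalProjectionOnto).le_opNorm (ee z)
      _ ≤ 1 * ‖ee z‖ :=
          mul_le_mul_of_nonneg_right (Submodule.orthogonalProjectionOnto_norm_le S) (norm_nonneg _)
      _ = ‖ee z‖ := one_mul _
  calc |z ⬝ᵥ M.mulVec z| ≤ vnorm z * vnorm (M.mulVec z) := dot_abs_le _ _
    _ = vnorm z * ‖p‖ := by rw [hMznorm]
    _ ≤ vnorm z * vnorm z := mul_le_mul_of_nonneg_left hple (vnorm_nonneg z)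
    _ = vnorm z ^ 2 := (sq (vnorm z)).symm

lemma vnorm_add_le {k : ℕ} (u v : Fin k → ℝ) : vnorm (u + v) ≤ vnorm u + vnorm v := by
  rw [vnorm_eq, vnorm_eq, vnorm_eq, map_add]
  exact norm_add_le _ _

lemma coef_bound {ε θ : ℝ} (hε : 0 ≤ ε) (hθ0 : 0 ≤ θ) :
    (1 + 4 * ε) - 2 * ((Real.pi - θ) / (2 * Real.pi))
      + 2 * (Real.sin θ / (2 * Real.pi)) ≤ 2 * (2 * ε + θ) := by
  have hπ : (0:ℝ) < Real.pi := Real.pi_pos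
  have hπ3 : (3:ℝ) < Real.pi := Real.pi_gt_three
  have hsin_le : Real.sin θ ≤ θ := Real.sin_le hθ0
  have e1 : 2 * ((Real.pi - θ) / (2 * Real.pi)) = 1 - θ / Real.pi := by
    field_simp
  have e2 : 2 * (Real.sin θ / (2 * Real.pi)) = Real.sin θ / Real.pi := by
    field_simp
  rw [e1, e2]
  have hθπ1 : θ / Real.pi ≤ θ := by
    rw [div_le_iff₀ hπ]
    nlinarith
  have hsπ1 : Real.sin θ / Real.pi ≤ θ := by
    rw [div_le_iff₀ hπ]
    nlinarith
  linarith

set_option maxHeartbeats 1600000 in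
theorem stmt13 {m k : ℕ} (W : Matrix (Fin m) (Fin k) ℝ) (ε : ℝ) (hW : WDC W ε)
    (x y : Fin k → ℝ) (hx : x ≠ 0) (hy : y ≠ 0) :
    vnorm ((Wplus W x).mulVec x - (Wplus W y).mulVec y) ≤
      (Real.sqrt (1 / 2 + ε) + Real.sqrt (2 * (2 * ε + ang x y))) * vnorm (x - y) := by
  classical
  set θ := ang x y with hθdef
  set d := x - y with hddef
  have hθ0 : 0 ≤ θ := Real.arccos_nonneg _
  have hθπ : θ ≤ Real.pi := Real.arccos_le_pi _
  have hsinθ : 0 ≤ Real.sin θ := Real.sin_nonneg_of_nonneg_of_le_pi hθ0 hθπ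
  -- `ang v v = 0` for `v ≠ 0`
  have hang_self : ∀ v : Fin k → ℝ, v ≠ 0 → ang v v = 0 := by
    intro v hv
    have h1 : v ⬝ᵥ v = vnorm v * vnorm v := by rw [← vnorm_sq]; ring
    rw [ang, h1, div_self (mul_ne_zero (vnorm_pos hv).ne' (vnorm_pos hv).ne')]
    exact Real.arccos_one
  -- half coefficient
  have hhalf : (Real.pi - 0) / (2 * Real.pi) = 1 / 2 := by
    have := Real.pi_ne_zero
    field_simp
    ring
  -- define the three sums
  set Ax : Matrix (Fin k) (Fin k) ℝ :=
    ∑ i : Fin m, if 0 < W i ⬝ᵥ x then vecMulVec (W i) (W i) else 0 with hAxdef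
  set Ay : Matrix (Fin k) (Fin k) ℝ :=
    ∑ i : Fin m, if 0 < W i ⬝ᵥ y then vecMulVec (W i) (W i) else 0 with hAydef
  set Axy : Matrix (Fin k) (Fin k) ℝ :=
    ∑ i : Fin m, if 0 < W i ⬝ᵥ x ∧ 0 < W i ⬝ᵥ y then vecMulVec (W i) (W i) else 0 with hAxydef
  -- WDC at (x, x)
  have hAx : opNorm (Ax - (1/2 : ℝ) • (1 : Matrix (Fin k) (Fin k) ℝ)) ≤ ε := by
    obtain ⟨M₁, -, -, -, -, hop⟩ := hW x x hx hx
    rw [hang_self x hx, Real.sin_zero, zero_div, zero_smul, add_zero, hhalf] at hop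
    have hsum : (∑ i : Fin m, if 0 < W i ⬝ᵥ x ∧ 0 < W i ⬝ᵥ x then vecMulVec (W i) (W i) else 0)
        = Ax := by
      refine Finset.sum_congr rfl fun i _ => ?_
      simp [and_self]
    rwa [hsum] at hop
  have hAy : opNorm (Ay - (1/2 : ℝ) • (1 : Matrix (Fin k) (Fin k) ℝ)) ≤ ε := by
    obtain ⟨M₁, -, -, -, -, hop⟩ := hW y y hy hy
    rw [hang_self y hy, Real.sin_zero, zero_div, zero_smul, add_zero, hhalf] at hop
    have hsum : (∑ i : Fin m, if 0 < W i ⬝ᵥ y ∧ 0 < W i ⬝ᵥ y then vecMulVec (W i) (W i) else 0)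
        = Ay := by
      refine Finset.sum_congr rfl fun i _ => ?_
      simp [and_self]
    rwa [hsum] at hop
  obtain ⟨M, -, hMx, hMy, hMperp, hop⟩ := hW x y hx hy
  rw [← hθdef] at hop
  have hε : 0 ≤ ε := le_trans (norm_nonneg _) hAx
  have hd2 : 0 ≤ vnorm d ^ 2 := sq_nonneg _
  -- quadratic form bounds
  have quad_close : ∀ (A B : Matrix (Fin k) (Fin k) ℝ) (v : Fin k → ℝ),
      opNorm (A - B) ≤ ε → |v ⬝ᵥ A.mulVec v - v ⬝ᵥ B.mulVec v| ≤ ε * vnorm v ^ 2 := by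
    intro A B v h
    have h1 := quad_abs_le (A - B) v
    rw [sub_mulVec, dotProduct_sub] at h1
    exact h1.trans (mul_le_mul_of_nonneg_right h (sq_nonneg _))
  have half_quad : ∀ v : Fin k → ℝ,
      v ⬝ᵥ ((1/2 : ℝ) • (1 : Matrix (Fin k) (Fin k) ℝ)).mulVec v = 1/2 * vnorm v ^ 2 := by
    intro v
    rw [smul_mulVec, one_mulVec, dotProduct_smul, smul_eq_mul, vnorm_sq]
  have hqx : ∀ v : Fin k → ℝ,
      |v ⬝ᵥ Ax.mulVec v - 1/2 * vnorm v ^ 2| ≤ ε * vnorm v ^ 2 := by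
    intro v
    rw [← half_quad v]
    exact quad_close _ _ v hAx
  have hqy : ∀ v : Fin k → ℝ,
      |v ⬝ᵥ Ay.mulVec v - 1/2 * vnorm v ^ 2| ≤ ε * vnorm v ^ 2 := by
    intro v
    rw [← half_quad v]
    exact quad_close _ _ v hAy
  -- the Q form
  have hQ : ∀ v : Fin k → ℝ,
      v ⬝ᵥ (((Real.pi - θ) / (2 * Real.pi)) • (1 : Matrix (Fin k) (Fin k) ℝ)
        + (Real.sin θ / (2 * Real.pi)) • M).mulVec v
      = (Real.pi - θ) / (2 * Real.pi) * vnorm v ^ 2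
        + Real.sin θ / (2 * Real.pi) * (v ⬝ᵥ M.mulVec v) := by
    intro v
    rw [add_mulVec, dotProduct_add, smul_mulVec, smul_mulVec, one_mulVec,
      dotProduct_smul, dotProduct_smul, smul_eq_mul, smul_eq_mul, vnorm_sq]
  have hqxy : ∀ v : Fin k → ℝ,
      |v ⬝ᵥ Axy.mulVec v - ((Real.pi - θ) / (2 * Real.pi) * vnorm v ^ 2
        + Real.sin θ / (2 * Real.pi) * (v ⬝ᵥ M.mulVec v))| ≤ ε * vnorm v ^ 2 := by
    intro v
    rw [← hQ v]
    exact quad_close _ _ v hop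
  have hMd := Mbound hx hy M hMx hMy hMperp d
  -- Term 1 : ‖W₊ₓ d‖
  have hcompx : ∀ i, ((Wplus W x).mulVec d) i = if 0 < W i ⬝ᵥ x then W i ⬝ᵥ d else 0 := by
    intro i
    by_cases h : 0 < W i ⬝ᵥ x <;> simp only [dotProduct] at h <;> simp [Wplus, mulVec, dotProduct, h]
  have hT1sq : vnorm ((Wplus W x).mulVec d) ^ 2 = d ⬝ᵥ Ax.mulVec d := by
    rw [hAxdef, quad_sum (w := W), vnorm, Real.sq_sqrt (by positivity)]
    refine Finset.sum_congr rfl fun i _ => ?_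
    rw [hcompx i]
    by_cases h : 0 < W i ⬝ᵥ x <;> simp [h]
  have hT1 : vnorm ((Wplus W x).mulVec d) ≤ Real.sqrt (1/2 + ε) * vnorm d := by
    have h1 : vnorm ((Wplus W x).mulVec d) ^ 2 ≤ (1/2 + ε) * vnorm d ^ 2 := by
      rw [hT1sq]
      have := abs_le.mp (hqx d)
      linarith [this.2]
    calc vnorm ((Wplus W x).mulVec d)
        = Real.sqrt (vnorm ((Wplus W x).mulVec d) ^ 2) :=
          (Real.sqrt_sq (vnorm_nonneg _)).symm
      _ ≤ Real.sqrt ((1/2 + ε) * vnorm d ^ 2) := Real.sqrt_le_sqrt h1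
      _ = Real.sqrt (1/2 + ε) * vnorm d := by
          rw [Real.sqrt_mul (by linarith), Real.sqrt_sq (vnorm_nonneg _)]
  -- Term 2 : ‖(W₊ₓ - W₊ᵧ) y‖
  set T2 : Fin m → ℝ := (Wplus W x).mulVec y - (Wplus W y).mulVec y with hT2def
  have hcomp2 : ∀ i, T2 i
      = (if 0 < W i ⬝ᵥ x then W i ⬝ᵥ y else 0) - (if 0 < W i ⬝ᵥ y then W i ⬝ᵥ y else 0) := by
    intro i
    have h1 : ((Wplus W x).mulVec y) i = if 0 < W i ⬝ᵥ x then W i ⬝ᵥ y else 0 := by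
      by_cases h : 0 < W i ⬝ᵥ x <;> simp only [dotProduct] at h <;> simp [Wplus, mulVec, dotProduct, h]
    have h2 : ((Wplus W y).mulVec y) i = if 0 < W i ⬝ᵥ y then W i ⬝ᵥ y else 0 := by
      by_cases h : 0 < W i ⬝ᵥ y <;> simp only [dotProduct] at h <;> simp [Wplus, mulVec, dotProduct, h]
    rw [hT2def]
    simp [h1, h2]
  have hpoint : ∀ i, T2 i ^ 2
      ≤ (if 0 < W i ⬝ᵥ x then (W i ⬝ᵥ d) ^ 2 else 0)
        + (if 0 < W i ⬝ᵥ y then (W i ⬝ᵥ d) ^ 2 else 0)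
        - 2 * (if 0 < W i ⬝ᵥ x ∧ 0 < W i ⬝ᵥ y then (W i ⬝ᵥ d) ^ 2 else 0) := by
    intro i
    have hd : W i ⬝ᵥ d = W i ⬝ᵥ x - W i ⬝ᵥ y := by rw [hddef, dotProduct_sub]
    rw [hcomp2 i]
    by_cases h1 : 0 < W i ⬝ᵥ x <;> by_cases h2 : 0 < W i ⬝ᵥ y <;>
      simp only [h1, h2, if_true, if_false, true_and, and_true, false_and, and_false,
        if_neg (fun h : False => h)] <;>
      nlinarith [sq_nonneg (W i ⬝ᵥ d)]
  have hT2sq : vnorm T2 ^ 2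
      ≤ d ⬝ᵥ Ax.mulVec d + d ⬝ᵥ Ay.mulVec d - 2 * (d ⬝ᵥ Axy.mulVec d) := by
    have h1 : vnorm T2 ^ 2 = ∑ i, T2 i ^ 2 := by
      rw [vnorm, Real.sq_sqrt (by positivity)]
    rw [h1]
    calc ∑ i, T2 i ^ 2
        ≤ ∑ i, ((if 0 < W i ⬝ᵥ x then (W i ⬝ᵥ d) ^ 2 else 0)
            + (if 0 < W i ⬝ᵥ y then (W i ⬝ᵥ d) ^ 2 else 0)
            - 2 * (if 0 < W i ⬝ᵥ x ∧ 0 < W i ⬝ᵥ y then (W i ⬝ᵥ d) ^ 2 else 0)) :=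
          Finset.sum_le_sum fun i _ => hpoint i
      _ = d ⬝ᵥ Ax.mulVec d + d ⬝ᵥ Ay.mulVec d - 2 * (d ⬝ᵥ Axy.mulVec d) := by
          rw [hAxdef, hAydef, hAxydef, quad_sum (w := W), quad_sum (w := W), quad_sum (w := W), Finset.mul_sum,
            Finset.sum_sub_distrib, Finset.sum_add_distrib]
  have hT2bound : vnorm T2 ^ 2 ≤ 2 * (2 * ε + θ) * vnorm d ^ 2 := by
    have h1 := abs_le.mp (hqx d)
    have h2 := abs_le.mp (hqy d)
    have h3 := abs_le.mp (hqxy d)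
    have h4 := abs_le.mp hMd
    have hπ : (0:ℝ) < Real.pi := Real.pi_pos
    have hπ3 : (3:ℝ) < Real.pi := Real.pi_gt_three
    have hsin_le : Real.sin θ ≤ θ := Real.sin_le hθ0
    have hc2 : 0 ≤ Real.sin θ / (2 * Real.pi) := by positivity
    have hMdlow : -(vnorm d ^ 2) ≤ d ⬝ᵥ M.mulVec d := h4.1
    have key : d ⬝ᵥ Ax.mulVec d + d ⬝ᵥ Ay.mulVec d - 2 * (d ⬝ᵥ Axy.mulVec d)
        ≤ (1 + 4 * ε) * vnorm d ^ 2
          - 2 * ((Real.pi - θ) / (2 * Real.pi)) * vnorm d ^ 2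
          + 2 * (Real.sin θ / (2 * Real.pi)) * vnorm d ^ 2 := by
      have hfromQ : (Real.pi - θ) / (2 * Real.pi) * vnorm d ^ 2
          + Real.sin θ / (2 * Real.pi) * (d ⬝ᵥ M.mulVec d) - ε * vnorm d ^ 2
          ≤ d ⬝ᵥ Axy.mulVec d := by linarith [h3.1]
      have hsinterm : Real.sin θ / (2 * Real.pi) * (-(vnorm d ^ 2))
          ≤ Real.sin θ / (2 * Real.pi) * (d ⬝ᵥ M.mulVec d) :=
        mul_le_mul_of_nonneg_left hMdlow hc2
      linarith [h1.2, h2.2, hfromQ, hsinterm]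
    have hcoef := coef_bound hε hθ0
    calc vnorm T2 ^ 2 ≤ d ⬝ᵥ Ax.mulVec d + d ⬝ᵥ Ay.mulVec d - 2 * (d ⬝ᵥ Axy.mulVec d) := hT2sq
      _ ≤ ((1 + 4 * ε) - 2 * ((Real.pi - θ) / (2 * Real.pi))
          + 2 * (Real.sin θ / (2 * Real.pi))) * vnorm d ^ 2 := by
          have hexp : ((1 + 4 * ε) - 2 * ((Real.pi - θ) / (2 * Real.pi))
              + 2 * (Real.sin θ / (2 * Real.pi))) * vnorm d ^ 2
              = (1 + 4 * ε) * vnorm d ^ 2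
                - 2 * ((Real.pi - θ) / (2 * Real.pi)) * vnorm d ^ 2
                + 2 * (Real.sin θ / (2 * Real.pi)) * vnorm d ^ 2 := by ring
          rw [hexp]
          exact key
      _ ≤ 2 * (2 * ε + θ) * vnorm d ^ 2 :=
          mul_le_mul_of_nonneg_right hcoef hd2
  have hT2 : vnorm T2 ≤ Real.sqrt (2 * (2 * ε + θ)) * vnorm d := by
    calc vnorm T2 = Real.sqrt (vnorm T2 ^ 2) := (Real.sqrt_sq (vnorm_nonneg _)).symm
      _ ≤ Real.sqrt (2 * (2 * ε + θ) * vnorm d ^ 2) := Real.sqrt_le_sqrt hT2bound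
      _ = Real.sqrt (2 * (2 * ε + θ)) * vnorm d := by
          rw [Real.sqrt_mul (by linarith), Real.sqrt_sq (vnorm_nonneg _)]
  -- combine
  have hdecomp : (Wplus W x).mulVec x - (Wplus W y).mulVec y = (Wplus W x).mulVec d + T2 := by
    rw [hT2def, hddef, mulVec_sub]
    abel
  have htri : vnorm ((Wplus W x).mulVec d + T2)
      ≤ vnorm ((Wplus W x).mulVec d) + vnorm T2 := vnorm_add_le _ _
  rw [hdecomp]
  calc vnorm ((Wplus W x).mulVec d + T2) ≤ vnorm ((Wplus W x).mulVec d) + vnorm T2 := htri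
    _ ≤ Real.sqrt (1/2 + ε) * vnorm d + Real.sqrt (2 * (2 * ε + θ)) * vnorm d :=
        add_le_add hT1 hT2
    _ = (Real.sqrt (1/2 + ε) + Real.sqrt (2 * (2 * ε + θ))) * vnorm d := by ring

end
end

section
/- Suppose W ∈ ℝ^{n×k} satisfies the WDC with constant ε. Then for any nonzero x, y with θ = ∠(x,y), ‖(W_{+,x} − W_{+,y}) y‖² ≤ 2(2ε + θ)‖x − y‖². -/
open Matrix

noncomputable section

namespace Helper
variable {k m : ℕ}
lemma dot_self_eq (x : Fin k → ℝ) : x ⬝ᵥ x = ∑ i, x i ^ 2 := by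
  simp [dotProduct, sq]

lemma vnorm_nonneg (x : Fin k → ℝ) : 0 ≤ vnorm x := Real.sqrt_nonneg _

lemma vnorm_sq (x : Fin k → ℝ) : vnorm x ^ 2 = x ⬝ᵥ x := by
  rw [vnorm, Real.sq_sqrt (by positivity), dot_self_eq]

lemma vnorm_pos {x : Fin k → ℝ} (hx : x ≠ 0) : 0 < vnorm x := by
  have h : ∃ i, x i ≠ 0 := by
    by_contra h; push_neg at h; exact hx (funext h)
  obtain ⟨i, hi⟩ := h
  apply Real.sqrt_pos.2
  exact Finset.sum_pos' (fun j _ => sq_nonneg _) ⟨i, Finset.mem_univ i, by positivity⟩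

lemma vnorm_eq_norm (x : Fin k → ℝ) :
    vnorm x = ‖(WithLp.equiv 2 (Fin k → ℝ)).symm x‖ := by
  rw [EuclideanSpace.norm_eq, vnorm]; simp [sq_abs]

lemma dot_eq_inner (x y : Fin k → ℝ) :
    x ⬝ᵥ y = inner ℝ ((WithLp.equiv 2 (Fin k → ℝ)).symm x) ((WithLp.equiv 2 (Fin k → ℝ)).symm y) := by
  rw [PiLp.inner_apply]; simp [dotProduct, mul_comm]

lemma opNorm_mulVec_le (M : Matrix (Fin m) (Fin k) ℝ) (z : Fin k → ℝ) :
    vnorm (M.mulVec z) ≤ opNorm M * vnorm z := by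
  have h := (LinearMap.toContinuousLinearMap (Matrix.toEuclideanLin M)).le_opNorm
    ((WithLp.equiv 2 (Fin k → ℝ)).symm z)
  rw [vnorm_eq_norm, vnorm_eq_norm]
  exact h

lemma opNorm_le_of (M : Matrix (Fin k) (Fin k) ℝ) (c : ℝ) (hc : 0 ≤ c)
    (h : ∀ z, vnorm (M.mulVec z) ≤ c * vnorm z) : opNorm M ≤ c := by
  apply ContinuousLinearMap.opNorm_le_bound _ hc
  intro z
  have := h ((WithLp.equiv 2 (Fin k → ℝ)) z)
  rw [vnorm_eq_norm, vnorm_eq_norm] at this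
  exact this

lemma quad_le (M : Matrix (Fin k) (Fin k) ℝ) (z : Fin k → ℝ) :
    z ⬝ᵥ M.mulVec z ≤ opNorm M * vnorm z ^ 2 := by
  rw [dot_eq_inner]
  calc _ ≤ ‖(WithLp.equiv 2 (Fin k → ℝ)).symm z‖ * ‖(WithLp.equiv 2 (Fin k → ℝ)).symm (M.mulVec z)‖ :=
        real_inner_le_norm _ _
    _ ≤ vnorm z * (opNorm M * vnorm z) := by
        rw [← vnorm_eq_norm, ← vnorm_eq_norm]
        exact mul_le_mul_of_nonneg_left (opNorm_mulVec_le M z) (vnorm_nonneg z)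
    _ = opNorm M * vnorm z ^ 2 := by ring

lemma opNorm_nonneg (M : Matrix (Fin m) (Fin k) ℝ) : 0 ≤ opNorm M := norm_nonneg _

lemma opNorm_add_le (A B : Matrix (Fin m) (Fin k) ℝ) : opNorm (A + B) ≤ opNorm A + opNorm B := by
  unfold opNorm; rw [map_add, map_add]; exact norm_add_le _ _

lemma opNorm_sub_le (A B : Matrix (Fin m) (Fin k) ℝ) : opNorm (A - B) ≤ opNorm A + opNorm B := by
  unfold opNorm; rw [map_sub, map_sub]; exact norm_sub_le _ _

lemma opNorm_smul (c : ℝ) (A : Matrix (Fin m) (Fin k) ℝ) : opNorm (c • A) = |c| * opNorm A := by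
  unfold opNorm; rw [_root_.map_smul, _root_.map_smul, ← Real.norm_eq_abs]
  exact norm_smul c (LinearMap.toContinuousLinearMap (toEuclideanLin A))

lemma opNorm_one_le : opNorm (1 : Matrix (Fin k) (Fin k) ℝ) ≤ 1 := by
  apply opNorm_le_of _ _ zero_le_one
  intro z; rw [Matrix.one_mulVec, one_mul]

lemma vnorm_eq_of_dot_eq {a b : Fin k → ℝ} (h : a ⬝ᵥ a = b ⬝ᵥ b) : vnorm a = vnorm b := by
  have := vnorm_sq a
  have := vnorm_sq b
  have h1 : vnorm a ^ 2 = vnorm b ^ 2 := by rw [vnorm_sq, vnorm_sq, h]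
  nlinarith [vnorm_nonneg a, vnorm_nonneg b]

lemma M_opNorm_le_one {x y : Fin k → ℝ} (hx : x ≠ 0) (hy : y ≠ 0)
    (M : Matrix (Fin k) (Fin k) ℝ)
    (h1 : M.mulVec ((vnorm x)⁻¹ • x) = (vnorm y)⁻¹ • y)
    (h2 : M.mulVec ((vnorm y)⁻¹ • y) = (vnorm x)⁻¹ • x)
    (h0 : ∀ z : Fin k → ℝ, x ⬝ᵥ z = 0 → y ⬝ᵥ z = 0 → M.mulVec z = 0) :
    opNorm M ≤ 1 := by
  set u : Fin k → ℝ := (vnorm x)⁻¹ • x with hu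
  set v : Fin k → ℝ := (vnorm y)⁻¹ • y with hv
  have huu : u ⬝ᵥ u = 1 := by
    rw [hu, smul_dotProduct, dotProduct_smul, ← vnorm_sq x]
    field_simp [ne_of_gt (vnorm_pos hx)]
    rw [smul_eq_mul, smul_eq_mul, one_div, ← mul_assoc, ← sq, ← mul_pow, inv_mul_cancel₀ (ne_of_gt (vnorm_pos hx)), one_pow]
  have hvv : v ⬝ᵥ v = 1 := by
    rw [hv, smul_dotProduct, dotProduct_smul, ← vnorm_sq y]
    field_simp [ne_of_gt (vnorm_pos hy)]
    rw [smul_eq_mul, smul_eq_mul, one_div, ← mul_assoc, ← sq, ← mul_pow, inv_mul_cancel₀ (ne_of_gt (vnorm_pos hy)), one_pow]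
  have h1' : M.mulVec u = v := h1
  have h2' : M.mulVec v = u := h2
  clear h1 h2
  clear_value u v
  apply opNorm_le_of _ _ zero_le_one
  intro z
  rw [one_mul]
  -- work in Euclidean space
  set E := EuclideanSpace ℝ (Fin k)
  set e : (Fin k → ℝ) ≃ (EuclideanSpace ℝ (Fin k)) := (WithLp.equiv 2 (Fin k → ℝ)).symm with he
  set K : Submodule ℝ (EuclideanSpace ℝ (Fin k)) := Submodule.span ℝ {e u, e v} with hK
  have huK : e u ∈ K := Submodule.subset_span (by simp)
  have hvK : e v ∈ K := Submodule.subset_span (by simp)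
  have hxK : e x ∈ K := by
    have : x = vnorm x • u := by
      rw [hu, smul_smul, mul_inv_cancel₀ (ne_of_gt (vnorm_pos hx)), one_smul]
    rw [this]
    have : e (vnorm x • u) = vnorm x • e u := rfl
    rw [this]
    exact K.smul_mem _ huK
  have hyK : e y ∈ K := by
    have : y = vnorm y • v := by
      rw [hv, smul_smul, mul_inv_cancel₀ (ne_of_gt (vnorm_pos hy)), one_smul]
    rw [this]
    have : e (vnorm y • v) = vnorm y • e v := rfl
    rw [this]
    exact K.smul_mem _ hvK
  set p : K := K.orthogonalProjectionOnto (e z) with hp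
  set w : EuclideanSpace ℝ (Fin k) := e z - (p : EuclideanSpace ℝ (Fin k)) with hw
  have hwmem : w ∈ Kᗮ := by exact K.sub_starProjection_mem_orthogonal (e z)
  have hesymm : ∀ q : EuclideanSpace ℝ (Fin k), e (e.symm q) = q := fun q => e.apply_symm_apply q
  have hMw : M.mulVec (e.symm w) = 0 := by
    apply h0
    · rw [dot_eq_inner]
      have hxw := (Submodule.mem_orthogonal K w).mp hwmem (e x) hxK
      show inner ℝ (e x) ((WithLp.equiv 2 (Fin k → ℝ)).symm (e.symm w)) = (0:ℝ)
      rw [show (WithLp.equiv 2 (Fin k → ℝ)).symm (e.symm w) = w from hesymm w]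
      exact hxw
    · rw [dot_eq_inner]
      have hyw := (Submodule.mem_orthogonal K w).mp hwmem (e y) hyK
      show inner ℝ (e y) ((WithLp.equiv 2 (Fin k → ℝ)).symm (e.symm w)) = (0:ℝ)
      rw [show (WithLp.equiv 2 (Fin k → ℝ)).symm (e.symm w) = w from hesymm w]
      exact hyw
  have hzdec : z = e.symm ((p : EuclideanSpace ℝ (Fin k))) + e.symm w := by
    have h1' : (p : EuclideanSpace ℝ (Fin k)) + w = e z := by rw [hw]; abel
    calc z = e.symm (e z) := (e.symm_apply_apply z).symm
      _ = e.symm ((p : EuclideanSpace ℝ (Fin k)) + w) := by rw [h1']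
      _ = e.symm (p : EuclideanSpace ℝ (Fin k)) + e.symm w := rfl
  have hMz : M.mulVec z = M.mulVec (e.symm (p : EuclideanSpace ℝ (Fin k))) := by
    rw [hzdec, mulVec_add, hMw, add_zero]
  obtain ⟨a, b, hab⟩ := Submodule.mem_span_pair.mp p.2
  have hep : e.symm (p : EuclideanSpace ℝ (Fin k)) = a • u + b • v := by
    rw [← hab]; rfl
  have hMp : M.mulVec (e.symm (p : EuclideanSpace ℝ (Fin k))) = a • v + b • u := by
    rw [hep, mulVec_add, mulVec_smul, mulVec_smul, h1', h2']
  have hdot : (a • v + b • u) ⬝ᵥ (a • v + b • u) = (a • u + b • v) ⬝ᵥ (a • u + b • v) := by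
    simp only [dotProduct_add, add_dotProduct, smul_dotProduct, dotProduct_smul, huu, hvv,
      dotProduct_comm v u, smul_eq_mul]
  have key : vnorm (M.mulVec z) = vnorm (e.symm (p : EuclideanSpace ℝ (Fin k))) := by
    rw [hMz, hMp, hep]
    exact vnorm_eq_of_dot_eq hdot
  rw [key]
  have h5 : vnorm (e.symm (p : EuclideanSpace ℝ (Fin k))) = ‖(p : EuclideanSpace ℝ (Fin k))‖ := by
    rw [vnorm_eq_norm]
    congr 1
  rw [h5, vnorm_eq_norm]
  calc ‖(p : EuclideanSpace ℝ (Fin k))‖ ≤ 1 * ‖e z‖ := by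
        have := (K.orthogonalProjectionOnto).le_opNorm (e z)
        have h6 := Submodule.orthogonalProjectionOnto_norm_le K
        calc ‖(p : EuclideanSpace ℝ (Fin k))‖ = ‖p‖ := rfl
          _ ≤ ‖K.orthogonalProjectionOnto‖ * ‖e z‖ := this
          _ ≤ 1 * ‖e z‖ := by exact mul_le_mul_of_nonneg_right h6 (norm_nonneg _)
    _ = ‖(WithLp.equiv 2 (Fin k → ℝ)).symm z‖ := by rw [one_mul]


lemma quad_sum {m k : ℕ} (c : Fin m → Prop) [DecidablePred c] (W : Matrix (Fin m) (Fin k) ℝ) (z : Fin k → ℝ) :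
    z ⬝ᵥ ((∑ i, if c i then vecMulVec (W i) (W i) else 0).mulVec z) =
      ∑ i, if c i then (W i ⬝ᵥ z)^2 else 0 := by
  have hif : ∀ (i : Fin m) (a b : Fin k),
      (if c i then vecMulVec (W i) (W i) else (0 : Matrix (Fin k) (Fin k) ℝ)) a b
        = if c i then W i a * W i b else 0 := by
    intro i a b; split <;> simp [vecMulVec_apply]
  simp only [Matrix.mulVec, dotProduct, Finset.sum_apply, Matrix.sum_apply, hif,
    Finset.sum_mul, Finset.mul_sum, mul_ite, ite_mul, zero_mul, mul_zero, Finset.sum_ite_irrel,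
    Finset.sum_const_zero]
  rw [Finset.sum_congr rfl (fun y _ => Finset.sum_comm ..), Finset.sum_comm]
  apply Finset.sum_congr rfl
  intro i _
  split
  · rw [sq, Finset.sum_mul_sum]
    rw [Finset.sum_comm]
    apply Finset.sum_congr rfl; intro a _
    apply Finset.sum_congr rfl; intro b _
    ring
  · simp

lemma ang_self {k : ℕ} {x : Fin k → ℝ} (hx : x ≠ 0) : ang x x = 0 := by
  have h1 : x ⬝ᵥ x = vnorm x * vnorm x := by rw [← vnorm_sq x]; ring
  rw [ang, h1, div_self (ne_of_gt (mul_pos (vnorm_pos hx) (vnorm_pos hx)))]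
  exact Real.arccos_one

end Helper

theorem stmt14 {m k : ℕ} (W : Matrix (Fin m) (Fin k) ℝ) (ε : ℝ) (hW : WDC W ε)
    (x y : Fin k → ℝ) (hx : x ≠ 0) (hy : y ≠ 0) :
    vnorm ((Wplus W x - Wplus W y).mulVec y) ^ 2 ≤
      2 * (2 * ε + ang x y) * vnorm (x - y) ^ 2 := by
  classical
  set θ := ang x y with hθ
  set z := x - y with hz
  -- WDC instances
  obtain ⟨Mxx, _, _, _, _, hExx⟩ := hW x x hx hx
  obtain ⟨Myy, _, _, _, _, hEyy⟩ := hW y y hy hy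
  obtain ⟨Mxy, hsym, hm1, hm2, hm0, hExy⟩ := hW x y hx hy
  set Sxx := ∑ i : Fin m, if 0 < W i ⬝ᵥ x ∧ 0 < W i ⬝ᵥ x then vecMulVec (W i) (W i) else 0 with hSxx
  set Syy := ∑ i : Fin m, if 0 < W i ⬝ᵥ y ∧ 0 < W i ⬝ᵥ y then vecMulVec (W i) (W i) else 0 with hSyy
  set Sxy := ∑ i : Fin m, if 0 < W i ⬝ᵥ x ∧ 0 < W i ⬝ᵥ y then vecMulVec (W i) (W i) else 0 with hSxy
  set Qxx := ((Real.pi - ang x x) / (2 * Real.pi)) • (1 : Matrix (Fin k) (Fin k) ℝ) +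
      (Real.sin (ang x x) / (2 * Real.pi)) • Mxx with hQxx
  set Qyy := ((Real.pi - ang y y) / (2 * Real.pi)) • (1 : Matrix (Fin k) (Fin k) ℝ) +
      (Real.sin (ang y y) / (2 * Real.pi)) • Myy with hQyy
  set Qxy := ((Real.pi - θ) / (2 * Real.pi)) • (1 : Matrix (Fin k) (Fin k) ℝ) +
      (Real.sin θ / (2 * Real.pi)) • Mxy with hQxy
  have hεnn : 0 ≤ ε := le_trans (Helper.opNorm_nonneg _) hExx
  have hθnn : 0 ≤ θ := Real.arccos_nonneg _
  have hθpi : θ ≤ Real.pi := Real.arccos_le_pi _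
  have hsin_nn : 0 ≤ Real.sin θ := Real.sin_nonneg_of_nonneg_of_le_pi hθnn hθpi
  have hsin_le : Real.sin θ ≤ θ := Real.sin_le hθnn
  have hpi1 : (1:ℝ) ≤ Real.pi := by linarith [Real.pi_gt_three]
  -- Step 1/2: pointwise bound
  have hstep1 : vnorm ((Wplus W x - Wplus W y).mulVec y) ^ 2 ≤
      z ⬝ᵥ Sxx.mulVec z + z ⬝ᵥ Syy.mulVec z - 2 * (z ⬝ᵥ Sxy.mulVec z) := by
    rw [Helper.vnorm_sq, Helper.dot_self_eq]
    rw [hSxx, hSyy, hSxy, Helper.quad_sum, Helper.quad_sum, Helper.quad_sum]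
    rw [← Finset.sum_add_distrib, Finset.mul_sum, ← Finset.sum_sub_distrib]
    apply Finset.sum_le_sum
    intro i _
    have hd : (Wplus W x - Wplus W y).mulVec y i =
        (if 0 < W i ⬝ᵥ x then W i ⬝ᵥ y else 0) - (if 0 < W i ⬝ᵥ y then W i ⬝ᵥ y else 0) := by
      rw [Matrix.sub_mulVec, Pi.sub_apply]
      congr 1 <;>
      · simp only [Wplus, Matrix.mulVec, dotProduct, Matrix.of_apply, ite_mul, zero_mul,
          Finset.sum_ite_irrel, Finset.sum_const_zero]
        split_ifs with h <;> simp [h]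
    rw [hd]
    have hzdot : W i ⬝ᵥ z = W i ⬝ᵥ x - W i ⬝ᵥ y := by rw [hz, dotProduct_sub]
    by_cases h1 : 0 < W i ⬝ᵥ x <;> by_cases h2 : 0 < W i ⬝ᵥ y <;>
      simp only [h1, h2, if_true, if_false, true_and, false_and, and_true, and_false,
        if_pos, if_neg, not_false_iff] <;>
      (try push_neg at *) <;> nlinarith [hzdot, sq_nonneg (W i ⬝ᵥ z)]
  -- Step 3/4: spectral bound
  set T := Sxx + Syy - (2:ℝ) • Sxy with hT
  have hstep2 : z ⬝ᵥ Sxx.mulVec z + z ⬝ᵥ Syy.mulVec z - 2 * (z ⬝ᵥ Sxy.mulVec z) =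
      z ⬝ᵥ T.mulVec z := by
    rw [hT, Matrix.sub_mulVec, Matrix.add_mulVec, Matrix.smul_mulVec,
      dotProduct_sub, dotProduct_add, dotProduct_smul]
    simp [smul_eq_mul]
  have hQ : Qxx + Qyy - (2:ℝ) • Qxy =
      (θ / Real.pi) • (1 : Matrix (Fin k) (Fin k) ℝ) + (-(Real.sin θ / Real.pi)) • Mxy := by
    rw [hQxx, hQyy, hQxy, Helper.ang_self hx, Helper.ang_self hy, Real.sin_zero]
    match_scalars <;> field_simp <;> ring
  have hTdecomp : T = ((Sxx - Qxx) + ((Syy - Qyy) - (2:ℝ) • (Sxy - Qxy))) +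
      ((θ / Real.pi) • (1 : Matrix (Fin k) (Fin k) ℝ) + (-(Real.sin θ / Real.pi)) • Mxy) := by
    rw [← hQ, hT]; module
  have hMxy1 : opNorm Mxy ≤ 1 := Helper.M_opNorm_le_one hx hy Mxy hm1 hm2 hm0
  have hTnorm : opNorm T ≤ 2 * (2 * ε + θ) := by
    rw [hTdecomp]
    have b1 := Helper.opNorm_add_le ((Sxx - Qxx) + ((Syy - Qyy) - (2:ℝ) • (Sxy - Qxy)))
      ((θ / Real.pi) • (1 : Matrix (Fin k) (Fin k) ℝ) + (-(Real.sin θ / Real.pi)) • Mxy)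
    have b2 := Helper.opNorm_add_le (Sxx - Qxx) ((Syy - Qyy) - (2:ℝ) • (Sxy - Qxy))
    have b3 := Helper.opNorm_sub_le (Syy - Qyy) ((2:ℝ) • (Sxy - Qxy))
    have b4 := Helper.opNorm_add_le ((θ / Real.pi) • (1 : Matrix (Fin k) (Fin k) ℝ))
      ((-(Real.sin θ / Real.pi)) • Mxy)
    have b5 : opNorm ((2:ℝ) • (Sxy - Qxy)) = 2 * opNorm (Sxy - Qxy) := by
      rw [Helper.opNorm_smul]; norm_num
    have b6 : opNorm ((θ / Real.pi) • (1 : Matrix (Fin k) (Fin k) ℝ)) ≤ θ / Real.pi := by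
      rw [Helper.opNorm_smul, abs_of_nonneg (by positivity)]
      calc θ / Real.pi * opNorm (1 : Matrix (Fin k) (Fin k) ℝ) ≤ θ / Real.pi * 1 :=
            mul_le_mul_of_nonneg_left Helper.opNorm_one_le (by positivity)
        _ = θ / Real.pi := mul_one _
    have b7 : opNorm ((-(Real.sin θ / Real.pi)) • Mxy) ≤ Real.sin θ / Real.pi := by
      rw [Helper.opNorm_smul, abs_neg, abs_of_nonneg (by positivity)]
      calc Real.sin θ / Real.pi * opNorm Mxy ≤ Real.sin θ / Real.pi * 1 :=
            mul_le_mul_of_nonneg_left hMxy1 (by positivity)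
        _ = Real.sin θ / Real.pi := mul_one _
    have hθdiv : θ / Real.pi ≤ θ := div_le_self hθnn hpi1
    have hsdiv : Real.sin θ / Real.pi ≤ θ := le_trans (div_le_self hsin_nn hpi1) hsin_le
    have hxy' : opNorm (Sxy - Qxy) ≤ ε := hExy
    have hxx' : opNorm (Sxx - Qxx) ≤ ε := hExx
    have hyy' : opNorm (Syy - Qyy) ≤ ε := hEyy
    linarith
  calc vnorm ((Wplus W x - Wplus W y).mulVec y) ^ 2 ≤ z ⬝ᵥ T.mulVec z := by
        rw [← hstep2]; exact hstep1
    _ ≤ opNorm T * vnorm z ^ 2 := Helper.quad_le T z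
    _ ≤ 2 * (2 * ε + θ) * vnorm z ^ 2 :=
        mul_le_mul_of_nonneg_right hTnorm (sq_nonneg _)

end
end

section
/- For any nonzero vectors x, y in ℝ^k with angle θ_{x,y} = ∠(x,y): ‖x − y‖ ≥ 2 sin(θ_{x,y}/2) · min(‖x‖, ‖y‖), and consequently (using sin(θ/2) ≥ θ/4 for θ ∈ [0,π]), ‖x/‖x‖ − y/‖y‖‖ ≤ θ_{x,y} ≤ 2 max(1/‖x‖, 1/‖y‖) ‖x − y‖. -/
set_option maxHeartbeats 1000000

open InnerProductGeometry Real

theorem stmt16 (k : ℕ) (x y : EuclideanSpace ℝ (Fin k)) (hx : x ≠ 0) (hy : y ≠ 0) :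
    2 * Real.sin (InnerProductGeometry.angle x y / 2) * min ‖x‖ ‖y‖ ≤ ‖x - y‖ ∧
    ‖(‖x‖⁻¹ • x) - (‖y‖⁻¹ • y)‖ ≤ InnerProductGeometry.angle x y ∧
    InnerProductGeometry.angle x y ≤ 2 * max (1 / ‖x‖) (1 / ‖y‖) * ‖x - y‖ := by
  set θ := InnerProductGeometry.angle x y with hθ
  have ha : (0:ℝ) < ‖x‖ := norm_pos_iff.mpr hx
  have hb : (0:ℝ) < ‖y‖ := norm_pos_iff.mpr hy
  have hθ0 : 0 ≤ θ := InnerProductGeometry.angle_nonneg x y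
  have hθπ : θ ≤ π := InnerProductGeometry.angle_le_pi x y
  have hs0 : 0 ≤ Real.sin (θ / 2) :=
    Real.sin_nonneg_of_nonneg_of_le_pi (by linarith) (by linarith [Real.pi_pos])
  -- inner = cos θ * ‖x‖ * ‖y‖
  have hinner : (inner ℝ x y : ℝ) = Real.cos θ * (‖x‖ * ‖y‖) := by
    rw [hθ, InnerProductGeometry.cos_angle, div_mul_cancel₀]
    positivity
  -- half angle: 1 - cos θ = 2 sin(θ/2)^2
  have hhalf : 1 - Real.cos θ = 2 * Real.sin (θ / 2) ^ 2 := by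
    have h1 := Real.cos_two_mul (θ / 2)
    have h2 := Real.sin_sq_add_cos_sq (θ / 2)
    have : Real.cos (2 * (θ / 2)) = Real.cos θ := by ring_nf
    nlinarith
  -- norm sub sq
  have hns : ‖x - y‖ ^ 2 = ‖x‖ ^ 2 + ‖y‖ ^ 2 - 2 * (Real.cos θ * (‖x‖ * ‖y‖)) := by
    rw [← hinner, @norm_sub_sq_real]; ring
  have hxy0 : 0 ≤ ‖x - y‖ := norm_nonneg _
  -- Part 1
  have part1 : 2 * Real.sin (θ / 2) * min ‖x‖ ‖y‖ ≤ ‖x - y‖ := by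
    have hm : 0 < min ‖x‖ ‖y‖ := lt_min ha hb
    have hma : min ‖x‖ ‖y‖ ≤ ‖x‖ := min_le_left _ _
    have hmb : min ‖x‖ ‖y‖ ≤ ‖y‖ := min_le_right _ _
    have hcos : 1 - Real.cos θ ≥ 0 := by nlinarith [Real.neg_one_le_cos θ, Real.cos_le_one θ]
    have hsq : (2 * Real.sin (θ / 2) * min ‖x‖ ‖y‖) ^ 2 ≤ ‖x - y‖ ^ 2 := by
      rw [hns]
      nlinarith [sq_nonneg (‖x‖ - ‖y‖), mul_le_mul hma hmb hm.le ha.le,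
        sq_nonneg (Real.sin (θ / 2))]
    nlinarith [mul_nonneg (mul_nonneg (by norm_num : (0:ℝ) ≤ 2) hs0) hm.le]
  refine ⟨part1, ?_, ?_⟩
  -- Part 2
  · have hux : ‖(‖x‖⁻¹ : ℝ) • x‖ = 1 := norm_smul_inv_norm hx
    have huy : ‖(‖y‖⁻¹ : ℝ) • y‖ = 1 := norm_smul_inv_norm hy
    have hiu : (inner ℝ ((‖x‖⁻¹ : ℝ) • x) ((‖y‖⁻¹ : ℝ) • y) : ℝ) = Real.cos θ := by
      rw [real_inner_smul_left, real_inner_smul_right, hinner]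
      field_simp
    have hnsu : ‖(‖x‖⁻¹ : ℝ) • x - (‖y‖⁻¹ : ℝ) • y‖ ^ 2 = 2 - 2 * Real.cos θ := by
      rw [@norm_sub_sq_real, hiu, hux, huy]; ring
    have hval : ‖(‖x‖⁻¹ : ℝ) • x - (‖y‖⁻¹ : ℝ) • y‖ = 2 * Real.sin (θ / 2) := by
      have h1 : ‖(‖x‖⁻¹ : ℝ) • x - (‖y‖⁻¹ : ℝ) • y‖ ^ 2 = (2 * Real.sin (θ / 2)) ^ 2 := by
        rw [hnsu]; nlinarith
      have h2 : 0 ≤ ‖(‖x‖⁻¹ : ℝ) • x - (‖y‖⁻¹ : ℝ) • y‖ := norm_nonneg _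
      nlinarith
    rw [hval]
    have hsinle : Real.sin (θ / 2) ≤ θ / 2 := by
      rcases eq_or_lt_of_le (by linarith : (0:ℝ) ≤ θ / 2) with h | h
      · simp [← h]
      · exact (Real.sin_lt h).le
    linarith
  -- Part 3
  · have hjordan : θ / 4 ≤ Real.sin (θ / 2) := by
      have := Real.mul_le_sin (x := θ / 2) (by linarith) (by linarith)
      have hπ4 : π ≤ 4 := Real.pi_le_four
      have hπ0 := Real.pi_pos
      have h1 : 2 / π * (θ / 2) = θ / π := by
        field_simp
      have h2 : θ / 4 ≤ θ / π := by
        rw [div_le_div_iff₀ (by norm_num) hπ0]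
        nlinarith
      linarith [h1 ▸ this]
    have hm : 0 < min ‖x‖ ‖y‖ := lt_min ha hb
    have key : θ / 2 * min ‖x‖ ‖y‖ ≤ ‖x - y‖ := by
      calc θ / 2 * min ‖x‖ ‖y‖ = 2 * (θ / 4) * min ‖x‖ ‖y‖ := by ring
        _ ≤ 2 * Real.sin (θ / 2) * min ‖x‖ ‖y‖ := by nlinarith
        _ ≤ ‖x - y‖ := part1
    have hmaxeq : max (1 / ‖x‖) (1 / ‖y‖) = 1 / min ‖x‖ ‖y‖ := by
      rcases le_total ‖x‖ ‖y‖ with h | h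
      · rw [min_eq_left h, max_eq_left (by apply one_div_le_one_div_of_le ha h)]
      · rw [min_eq_right h, max_eq_right (by apply one_div_le_one_div_of_le hb h)]
    rw [hmaxeq]
    rw [show (2:ℝ) * (1 / (‖x‖ ⊓ ‖y‖)) * ‖x - y‖ = 2 * ‖x - y‖ / (‖x‖ ⊓ ‖y‖) by ring,
      le_div_iff₀ hm]
    linarith
end
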